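/- arXiv:2406.08992 — 4 statements merged into one kernel-verified Lean document; each statement's English description precedes it below -/
import Mathlib

section
/- Let n1, n2 be positive integers, let J : ℝ^{n1×n2} × ℝ^{n1} → ℝ be lower semicontinuous, let μ2^d ∈ ℝ^{n2} with μ2^d ≥ 0 componentwise, and let c_d ∈ ℝ^{n1×n2}. Then the bilevel Hitchcock problem has at least one optimal solution: there exists (π*, μ1*) in the bilevel feasible set F(μ2^d, c_d) such that J(π*, μ1*) ≤ J(π, μ1) for all (π, μ1) ∈ F(μ2^d, c_d). -/
noncomputable section

open Set Filter Topology

/-- The transport polytope Π(μ1, μ2). -/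
def transportPolytope {n1 n2 : ℕ} (μ1 : Fin n1 → ℝ) (μ2 : Fin n2 → ℝ) :
    Set (Fin n1 → Fin n2 → ℝ) :=
  {π | (∀ i j, 0 ≤ π i j) ∧ (∀ i, (∑ j, π i j) = μ1 i) ∧ (∀ j, (∑ i, π i j) = μ2 j)}

/-- The Frobenius inner product ⟨c, π⟩_F. -/
def frob {n1 n2 : ℕ} (c π : Fin n1 → Fin n2 → ℝ) : ℝ := ∑ i, ∑ j, c i j * π i j

/-- π solves the Hitchcock problem (H) w.r.t. μ1, μ2, c. -/
def SolvesH {n1 n2 : ℕ} (μ1 : Fin n1 → ℝ) (μ2 : Fin n2 → ℝ)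
    (c π : Fin n1 → Fin n2 → ℝ) : Prop :=
  π ∈ transportPolytope μ1 μ2 ∧
    ∀ θ ∈ transportPolytope μ1 μ2, frob c π ≤ frob c θ

/-- The bilevel feasible set F(μ2, c). -/
def bilevelFeas {n1 n2 : ℕ} (μ2 : Fin n2 → ℝ) (c : Fin n1 → Fin n2 → ℝ) :
    Set ((Fin n1 → Fin n2 → ℝ) × (Fin n1 → ℝ)) :=
  {p | (∀ i, 0 ≤ p.2 i) ∧ ((∑ i, p.2 i) = ∑ j, μ2 j) ∧ SolvesH p.2 μ2 c p.1}

/-- A lower semicontinuous function attains its minimum on a nonempty compact set. -/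
lemma lsc_exists_min {X : Type*} [TopologicalSpace X] {s : Set X} (hs : IsCompact s)
    (hne : s.Nonempty) {f : X → ℝ} (hf : LowerSemicontinuous f) :
    ∃ x ∈ s, ∀ y ∈ s, f x ≤ f y := by
  have h := hs.inter_iInter_nonempty (fun y : s => {x | f x ≤ f y.1})
    (fun y => hf.isClosed_preimage (f y.1)) ?_
  · obtain ⟨x, hxs, hx⟩ := h
    refine ⟨x, hxs, fun y hy => ?_⟩
    simpa using Set.mem_iInter.1 hx ⟨y, hy⟩
  · intro u
    rcases u.eq_empty_or_nonempty with rfl | hu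
    · simpa using hne
    · obtain ⟨y0, hy0, hmin⟩ := u.exists_min_image (fun y : s => f y.1) hu
      refine ⟨y0.1, y0.2, ?_⟩
      simp only [Set.mem_iInter]
      intro y hy
      exact hmin y hy

/-- Perturbation lemma: a transport plan for row marginals μ1 can be modified into one
for nearby row marginals μ1' (same total mass), with entrywise control. -/
lemma perturb {n1 n2 : ℕ} (μ1 μ1' : Fin n1 → ℝ) (μ2 : Fin n2 → ℝ)
    (h1' : ∀ i, 0 ≤ μ1' i) (hsum : ∑ i, μ1' i = ∑ i, μ1 i)
    (θ : Fin n1 → Fin n2 → ℝ) (hθ : θ ∈ transportPolytope μ1 μ2) :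
    ∃ θ' ∈ transportPolytope μ1' μ2, ∀ i j, |θ' i j - θ i j| ≤ 2 * |μ1' i - μ1 i| := by
  obtain ⟨hθpos, hθrow, hθcol⟩ := hθ
  have h1 : ∀ i, 0 ≤ μ1 i := fun i => (hθrow i) ▸ Finset.sum_nonneg fun j _ => hθpos i j
  have hentry : ∀ i j, θ i j ≤ μ1 i := fun i j => (hθrow i) ▸
    Finset.single_le_sum (fun j _ => hθpos i j) (Finset.mem_univ j)
  set t : Fin n1 → ℝ := fun i => min (μ1' i / μ1 i) 1 with ht
  have ht0 : ∀ i, 0 ≤ t i := fun i => le_min (div_nonneg (h1' i) (h1 i)) zero_le_one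
  have ht1 : ∀ i, t i ≤ 1 := fun i => min_le_right _ _
  have key : ∀ i, t i * μ1 i = min (μ1' i) (μ1 i) := by
    intro i
    rcases eq_or_lt_of_le (h1 i) with h | h
    · simp [ht, ← h, min_eq_right (h1' i)]
    · rw [ht]
      rw [min_mul_of_nonneg _ _ (h1 i), div_mul_cancel₀ _ (ne_of_gt h), one_mul]
  have hs0 : ∀ i, 0 ≤ μ1' i - t i * μ1 i := by
    intro i; rw [key]; simp [min_le_left]
  have hd0 : ∀ i, 0 ≤ (1 - t i) * μ1 i :=
    fun i => mul_nonneg (by linarith [ht1 i]) (h1 i)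
  set D : ℝ := ∑ i, (1 - t i) * μ1 i with hD
  have hDs : ∑ i, (μ1' i - t i * μ1 i) = D := by
    rw [hD]
    rw [Finset.sum_sub_distrib]
    rw [hsum]
    rw [Finset.sum_congr rfl (fun i _ => (one_sub_mul (t i) (μ1 i)))]
    rw [Finset.sum_sub_distrib]
  have hbound1 : ∀ i, μ1 i - min (μ1' i) (μ1 i) ≤ |μ1' i - μ1 i| := by
    intro i; rcases le_total (μ1' i) (μ1 i) with h | h
    · rw [min_eq_left h, abs_sub_comm, abs_of_nonneg (by linarith)]
    · rw [min_eq_right h]; simp [abs_nonneg]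
  have hbound2 : ∀ i, μ1' i - min (μ1' i) (μ1 i) ≤ |μ1' i - μ1 i| := by
    intro i; rcases le_total (μ1' i) (μ1 i) with h | h
    · rw [min_eq_left h]; simp [abs_nonneg]
    · rw [min_eq_right h, abs_of_nonneg (by linarith)]
  rcases eq_or_lt_of_le (Finset.sum_nonneg (fun i _ => hd0 i) : (0:ℝ) ≤ D) with hD0 | hD0
  · -- D = 0 : μ1' = μ1
    have hz : ∀ i ∈ Finset.univ, (1 - t i) * μ1 i = 0 :=
      (Finset.sum_eq_zero_iff_of_nonneg (fun i _ => hd0 i)).1 hD0.symm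
    have hle : ∀ i, μ1 i ≤ μ1' i := by
      intro i
      have := hz i (Finset.mem_univ i)
      have h2 : μ1 i - t i * μ1 i = 0 := by linarith [this, (one_sub_mul (t i) (μ1 i))]
      rw [key] at h2
      rcases le_total (μ1' i) (μ1 i) with h | h
      · rw [min_eq_left h] at h2; linarith
      · exact h
    have heq : μ1' = μ1 := by
      funext i
      have hzz : ∀ i ∈ Finset.univ, μ1' i - μ1 i = 0 := by
        refine (Finset.sum_eq_zero_iff_of_nonneg (fun i _ => by linarith [hle i])).1 ?_
        rw [Finset.sum_sub_distrib, hsum]; ring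
      linarith [hzz i (Finset.mem_univ i)]
    exact ⟨θ, by rw [heq]; exact ⟨hθpos, hθrow, hθcol⟩,
      fun i j => by simp [heq, abs_nonneg]⟩
  · -- D > 0
    set r : Fin n2 → ℝ := fun j => ∑ i, (1 - t i) * θ i j with hr
    have hr0 : ∀ j, 0 ≤ r j := fun j => Finset.sum_nonneg fun i _ =>
      mul_nonneg (by linarith [ht1 i]) (hθpos i j)
    have hrsum : ∑ j, r j = D := by
      rw [hr, hD, Finset.sum_comm]
      exact Finset.sum_congr rfl fun i _ => by rw [← Finset.mul_sum, hθrow i]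
    have hrD : ∀ j, r j ≤ D := fun j => hrsum ▸
      Finset.single_le_sum (fun j _ => hr0 j) (Finset.mem_univ j)
    set θ' : Fin n1 → Fin n2 → ℝ :=
      fun i j => t i * θ i j + (μ1' i - t i * μ1 i) * (r j / D) with hθ'
    refine ⟨θ', ⟨?_, ?_, ?_⟩, ?_⟩
    · intro i j
      exact add_nonneg (mul_nonneg (ht0 i) (hθpos i j))
        (mul_nonneg (hs0 i) (div_nonneg (hr0 j) hD0.le))
    · intro i
      rw [hθ']
      simp only
      rw [Finset.sum_add_distrib, ← Finset.mul_sum, hθrow i, ← Finset.mul_sum,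
        ← Finset.sum_div, hrsum, div_self (ne_of_gt hD0)]
      ring
    · intro j
      rw [hθ']
      simp only
      rw [Finset.sum_add_distrib, ← Finset.sum_mul, hDs]
      have : D * (r j / D) = r j := by have hDne : D ≠ 0 := ne_of_gt hD0; field_simp
      rw [this]
      have : ∑ i, t i * θ i j + r j = ∑ i, θ i j := by
        rw [hr, ← Finset.sum_add_distrib]
        exact Finset.sum_congr rfl fun i _ => by ring
      rw [this, hθcol j]
    · intro i j
      rw [hθ']
      simp only
      rw [abs_le]
      constructor
      · have h1' : (μ1' i - t i * μ1 i) * (r j / D) ≥ 0 :=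
          mul_nonneg (hs0 i) (div_nonneg (hr0 j) hD0.le)
        have h2' : t i * θ i j - θ i j ≥ -((1 - t i) * μ1 i) := by
          have := mul_le_mul_of_nonneg_left (hentry i j) (by linarith [ht1 i] : 0 ≤ 1 - t i)
          nlinarith
        have h3' : (1 - t i) * μ1 i ≤ |μ1' i - μ1 i| := by
          have := hbound1 i; rw [← key i] at this; nlinarith [this]
        have : (0:ℝ) ≤ |μ1' i - μ1 i| := abs_nonneg _
        nlinarith
      · have h1' : (μ1' i - t i * μ1 i) * (r j / D) ≤ μ1' i - t i * μ1 i := by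
          have hle1 : r j / D ≤ 1 := (div_le_one hD0).2 (hrD j)
          nlinarith [hs0 i]
        have h2' : t i * θ i j - θ i j ≤ 0 := by
          nlinarith [ht1 i, hθpos i j]
        have h3' : μ1' i - t i * μ1 i ≤ |μ1' i - μ1 i| := by
          rw [key i]; exact hbound2 i
        have : (0:ℝ) ≤ |μ1' i - μ1 i| := abs_nonneg _
        linarith

lemma frob_continuous {n1 n2 : ℕ} (c : Fin n1 → Fin n2 → ℝ) :
    Continuous (fun π : Fin n1 → Fin n2 → ℝ => frob c π) := by
  unfold frob
  exact continuous_finset_sum _ fun i _ => continuous_finset_sum _ fun j _ =>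
    (continuous_const.mul ((continuous_apply j).comp (continuous_apply i)))

lemma tp_isClosed {n1 n2 : ℕ} (μ1 : Fin n1 → ℝ) (μ2 : Fin n2 → ℝ) :
    IsClosed (transportPolytope μ1 μ2) := by
  have hev : ∀ (i : Fin n1) (j : Fin n2),
      Continuous (fun π : Fin n1 → Fin n2 → ℝ => π i j) :=
    fun i j => (continuous_apply j).comp (continuous_apply i)
  have h1 : IsClosed {π : Fin n1 → Fin n2 → ℝ | ∀ i j, 0 ≤ π i j} := by
    have : {π : Fin n1 → Fin n2 → ℝ | ∀ i j, 0 ≤ π i j} =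
        ⋂ i, ⋂ j, {π | 0 ≤ π i j} := by ext π; simp [Set.mem_iInter]
    rw [this]
    exact isClosed_iInter fun i => isClosed_iInter fun j =>
      isClosed_le continuous_const (hev i j)
  have h2 : IsClosed {π : Fin n1 → Fin n2 → ℝ | ∀ i, (∑ j, π i j) = μ1 i} := by
    have : {π : Fin n1 → Fin n2 → ℝ | ∀ i, (∑ j, π i j) = μ1 i} =
        ⋂ i, {π | (∑ j, π i j) = μ1 i} := by ext π; simp [Set.mem_iInter]
    rw [this]
    exact isClosed_iInter fun i =>
      isClosed_eq (continuous_finset_sum _ fun j _ => hev i j) continuous_const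
  have h3 : IsClosed {π : Fin n1 → Fin n2 → ℝ | ∀ j, (∑ i, π i j) = μ2 j} := by
    have : {π : Fin n1 → Fin n2 → ℝ | ∀ j, (∑ i, π i j) = μ2 j} =
        ⋂ j, {π | (∑ i, π i j) = μ2 j} := by ext π; simp [Set.mem_iInter]
    rw [this]
    exact isClosed_iInter fun j =>
      isClosed_eq (continuous_finset_sum _ fun i _ => hev i j) continuous_const
  have : transportPolytope μ1 μ2 =
      {π : Fin n1 → Fin n2 → ℝ | ∀ i j, 0 ≤ π i j} ∩
      ({π | ∀ i, (∑ j, π i j) = μ1 i} ∩ {π | ∀ j, (∑ i, π i j) = μ2 j}) := by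
    ext π; simp [transportPolytope, and_assoc]
  rw [this]
  exact h1.inter (h2.inter h3)

lemma tp_isCompact {n1 n2 : ℕ} (μ1 : Fin n1 → ℝ) (μ2 : Fin n2 → ℝ) (h2 : ∀ j, 0 ≤ μ2 j) :
    IsCompact (transportPolytope μ1 μ2) := by
  set S := ∑ j, μ2 j with hS
  have hbox : IsCompact (Set.pi Set.univ fun _ : Fin n1 =>
      Set.pi Set.univ fun _ : Fin n2 => Set.Icc (0:ℝ) S) :=
    isCompact_univ_pi fun i => isCompact_univ_pi fun j => isCompact_Icc
  refine IsCompact.of_isClosed_subset hbox (tp_isClosed μ1 μ2) ?_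
  rintro π ⟨hpos, _, hcol⟩
  intro i _
  intro j _
  refine ⟨hpos i j, ?_⟩
  calc π i j ≤ ∑ i', π i' j :=
        Finset.single_le_sum (fun i' _ => hpos i' j) (Finset.mem_univ i)
    _ = μ2 j := hcol j
    _ ≤ S := Finset.single_le_sum (fun j' _ => h2 j') (Finset.mem_univ j)

lemma tp_nonempty {n1 n2 : ℕ} (μ1 : Fin n1 → ℝ) (μ2 : Fin n2 → ℝ)
    (h1 : ∀ i, 0 ≤ μ1 i) (h2 : ∀ j, 0 ≤ μ2 j) (hsum : ∑ i, μ1 i = ∑ j, μ2 j) :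
    (transportPolytope μ1 μ2).Nonempty := by
  set S := ∑ j, μ2 j with hS
  have hS0 : 0 ≤ S := Finset.sum_nonneg fun j _ => h2 j
  rcases eq_or_lt_of_le hS0 with hz | hpos
  · -- S = 0 : all μ are zero
    have hμ2 : ∀ j, μ2 j = 0 := fun j => le_antisymm (by
      have := Finset.single_le_sum (fun j' (_ : j' ∈ Finset.univ) => h2 j') (Finset.mem_univ j)
      linarith [hz]) (h2 j)
    have hμ1 : ∀ i, μ1 i = 0 := fun i => le_antisymm (by
      have := Finset.single_le_sum (fun i' (_ : i' ∈ Finset.univ) => h1 i') (Finset.mem_univ i)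
      linarith [hz, hsum]) (h1 i)
    exact ⟨fun _ _ => 0, fun i j => le_refl 0, fun i => by simp [hμ1 i],
      fun j => by simp [hμ2 j]⟩
  · refine ⟨fun i j => μ1 i * μ2 j / S, fun i j => div_nonneg (mul_nonneg (h1 i) (h2 j)) hS0,
      fun i => ?_, fun j => ?_⟩
    · rw [← Finset.sum_div, ← Finset.mul_sum, ← hS, mul_div_assoc,
        div_self (ne_of_gt hpos), mul_one]
    · rw [← Finset.sum_div, ← Finset.sum_mul, hsum]
      rw [mul_comm, mul_div_assoc, div_self (ne_of_gt hpos), mul_one]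

lemma exists_solvesH {n1 n2 : ℕ} (μ1 : Fin n1 → ℝ) (μ2 : Fin n2 → ℝ)
    (h1 : ∀ i, 0 ≤ μ1 i) (h2 : ∀ j, 0 ≤ μ2 j) (hsum : ∑ i, μ1 i = ∑ j, μ2 j)
    (c : Fin n1 → Fin n2 → ℝ) : ∃ π, SolvesH μ1 μ2 c π := by
  obtain ⟨π, hπ, hmin⟩ := (tp_isCompact μ1 μ2 h2).exists_isMinOn
    (tp_nonempty μ1 μ2 h1 h2 hsum) ((frob_continuous c).continuousOn)
  exact ⟨π, hπ, fun θ hθ => hmin hθ⟩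

lemma bf_isClosed {n1 n2 : ℕ} (μ2 : Fin n2 → ℝ) (c : Fin n1 → Fin n2 → ℝ) :
    IsClosed (bilevelFeas μ2 c) := by
  refine IsSeqClosed.isClosed ?_
  intro x p hx hlim
  have hπlim : ∀ i j, Tendsto (fun k => (x k).1 i j) atTop (𝓝 (p.1 i j)) := by
    intro i j
    have h : Continuous (fun q : (Fin n1 → Fin n2 → ℝ) × (Fin n1 → ℝ) => q.1 i j) := by
      fun_prop
    exact (h.tendsto p).comp hlim
  have hμlim : ∀ i, Tendsto (fun k => (x k).2 i) atTop (𝓝 (p.2 i)) := by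
    intro i
    have h : Continuous (fun q : (Fin n1 → Fin n2 → ℝ) × (Fin n1 → ℝ) => q.2 i) := by
      fun_prop
    exact (h.tendsto p).comp hlim
  have hμpos : ∀ i, 0 ≤ p.2 i := fun i => ge_of_tendsto' (hμlim i) (fun k => (hx k).1 i)
  have hμsum : (∑ i, p.2 i) = ∑ j, μ2 j := by
    have hsl : Tendsto (fun k => ∑ i, (x k).2 i) atTop (𝓝 (∑ i, p.2 i)) :=
      tendsto_finset_sum _ (fun i _ => hμlim i)
    have he : (fun k => ∑ i, (x k).2 i) = fun _ => ∑ j, μ2 j :=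
      funext fun k => (hx k).2.1
    rw [he] at hsl
    exact tendsto_nhds_unique hsl tendsto_const_nhds
  have hπpos : ∀ i j, 0 ≤ p.1 i j := fun i j =>
    ge_of_tendsto' (hπlim i j) (fun k => (hx k).2.2.1.1 i j)
  have hπrow : ∀ i, (∑ j, p.1 i j) = p.2 i := by
    intro i
    have hsl : Tendsto (fun k => ∑ j, (x k).1 i j) atTop (𝓝 (∑ j, p.1 i j)) :=
      tendsto_finset_sum _ (fun j _ => hπlim i j)
    have he : (fun k => ∑ j, (x k).1 i j) = fun k => (x k).2 i :=
      funext fun k => (hx k).2.2.1.2.1 i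
    rw [he] at hsl
    exact tendsto_nhds_unique hsl (hμlim i)
  have hπcol : ∀ j, (∑ i, p.1 i j) = μ2 j := by
    intro j
    have hsl : Tendsto (fun k => ∑ i, (x k).1 i j) atTop (𝓝 (∑ i, p.1 i j)) :=
      tendsto_finset_sum _ (fun i _ => hπlim i j)
    have he : (fun k => ∑ i, (x k).1 i j) = fun _ => μ2 j :=
      funext fun k => (hx k).2.2.1.2.2 j
    rw [he] at hsl
    exact tendsto_nhds_unique hsl tendsto_const_nhds
  refine ⟨hμpos, hμsum, ⟨hπpos, hπrow, hπcol⟩, ?_⟩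
  intro θ hθ
  have hsk : ∀ k, ∑ i, (x k).2 i = ∑ i, p.2 i := fun k => by rw [(hx k).2.1, hμsum]
  choose θ' hθ'mem hθ'bd using fun k =>
    perturb p.2 ((x k).2) μ2 (fun i => (hx k).1 i) (hsk k) θ hθ
  have hle : ∀ k, frob c ((x k).1) ≤ frob c (θ' k) := fun k =>
    (hx k).2.2.2 (θ' k) (hθ'mem k)
  have hθ'lim : ∀ i j, Tendsto (fun k => θ' k i j) atTop (𝓝 (θ i j)) := by
    intro i j
    have hdiff : Tendsto (fun k => θ' k i j - θ i j) atTop (𝓝 0) := by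
      apply squeeze_zero_norm (fun k => hθ'bd k i j)
      have h1 : Tendsto (fun k => (x k).2 i - p.2 i) atTop (𝓝 0) := by
        have := (hμlim i).sub (tendsto_const_nhds (x := p.2 i))
        simpa using this
      have h2 : Tendsto (fun k => 2 * |(x k).2 i - p.2 i|) atTop (𝓝 (2 * |(0:ℝ)|)) :=
        (h1.abs).const_mul 2
      simpa using h2
    have := hdiff.add (tendsto_const_nhds (x := θ i j))
    simpa using this
  have hfl : Tendsto (fun k => frob c (θ' k)) atTop (𝓝 (frob c θ)) := by
    unfold frob
    exact tendsto_finset_sum _ fun i _ => tendsto_finset_sum _ fun j _ =>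
      (hθ'lim i j).const_mul (c i j)
  have hfπ : Tendsto (fun k => frob c ((x k).1)) atTop (𝓝 (frob c p.1)) := by
    unfold frob
    exact tendsto_finset_sum _ fun i _ => tendsto_finset_sum _ fun j _ =>
      (hπlim i j).const_mul (c i j)
  exact le_of_tendsto_of_tendsto' hfπ hfl hle

lemma bf_isCompact {n1 n2 : ℕ} (μ2 : Fin n2 → ℝ) (h2 : ∀ j, 0 ≤ μ2 j)
    (c : Fin n1 → Fin n2 → ℝ) : IsCompact (bilevelFeas μ2 c) := by
  set S := ∑ j, μ2 j with hS
  have hbox : IsCompact ((Set.pi Set.univ fun _ : Fin n1 =>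
      Set.pi Set.univ fun _ : Fin n2 => Set.Icc (0:ℝ) S) ×ˢ
      (Set.pi Set.univ fun _ : Fin n1 => Set.Icc (0:ℝ) S)) :=
    (isCompact_univ_pi fun _ => isCompact_univ_pi fun _ => isCompact_Icc).prod
      (isCompact_univ_pi fun _ => isCompact_Icc)
  refine IsCompact.of_isClosed_subset hbox (bf_isClosed μ2 c) ?_
  rintro p ⟨hμpos, hμsum, ⟨hπpos, _, hπcol⟩, -⟩
  constructor
  · intro i _ j _
    refine ⟨hπpos i j, ?_⟩
    calc p.1 i j ≤ ∑ i', p.1 i' j :=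
          Finset.single_le_sum (fun i' _ => hπpos i' j) (Finset.mem_univ i)
      _ = μ2 j := hπcol j
      _ ≤ S := Finset.single_le_sum (fun j' _ => h2 j') (Finset.mem_univ j)
  · intro i _
    refine ⟨hμpos i, ?_⟩
    calc p.2 i ≤ ∑ i', p.2 i' :=
          Finset.single_le_sum (fun i' _ => hμpos i') (Finset.mem_univ i)
      _ = S := hμsum

lemma bf_nonempty {n1 n2 : ℕ} (hn1 : 0 < n1) (μ2 : Fin n2 → ℝ) (h2 : ∀ j, 0 ≤ μ2 j)
    (c : Fin n1 → Fin n2 → ℝ) : (bilevelFeas μ2 c).Nonempty := by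
  set S := ∑ j, μ2 j with hS
  have hS0 : 0 ≤ S := Finset.sum_nonneg fun j _ => h2 j
  set μ1 : Fin n1 → ℝ := fun _ => S / n1 with hμ1
  have h1 : ∀ i, 0 ≤ μ1 i := fun i => div_nonneg hS0 (Nat.cast_nonneg n1)
  have hsum : ∑ i, μ1 i = S := by
    rw [hμ1]
    rw [Finset.sum_const, Finset.card_univ, Fintype.card_fin, nsmul_eq_mul]
    field_simp
  obtain ⟨π, hπ⟩ := exists_solvesH μ1 μ2 h1 h2 (by rw [hsum]) c
  exact ⟨(π, μ1), h1, hsum, hπ⟩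

/-- The bilevel Hitchcock problem has at least one optimal solution. -/
theorem bilevel_hitchcock_has_solution (n1 n2 : ℕ) (hn1 : 0 < n1) (hn2 : 0 < n2)
    (J : (Fin n1 → Fin n2 → ℝ) × (Fin n1 → ℝ) → ℝ) (hJ : LowerSemicontinuous J)
    (μ2d : Fin n2 → ℝ) (hμ2d : ∀ j, 0 ≤ μ2d j) (cd : Fin n1 → Fin n2 → ℝ) :
    ∃ p ∈ bilevelFeas μ2d cd, ∀ q ∈ bilevelFeas μ2d cd, J p ≤ J q :=
  lsc_exists_min (bf_isCompact μ2d hμ2d cd) (bf_nonempty hn1 μ2d hμ2d cd) hJ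
end
end

section
/- Let n1, n2 be positive integers, let γ > 0, let μ1 ∈ ℝ^{n1} and μ2 ∈ ℝ^{n2} satisfy μ1 ≥ 0 and μ2 ≥ 0 componentwise and Σ_i μ1_i = Σ_j μ2_j, and let c ∈ ℝ^{n1×n2}. Define Φ(α1, α2) := ⟨α1, μ1⟩ + ⟨α2, μ2⟩ − (1/(2γ)) ‖(α1 ⊕ α2 − c)_+‖_F² on ℝ^{n1} × ℝ^{n2}. Then: (i) Φ attains its maximum over ℝ^{n1} × ℝ^{n2}; and (ii) strong duality holds: the maximum of Φ over ℝ^{n1} × ℝ^{n2} equals the minimum of θ ↦ ⟨c, θ⟩_F + (γ/2)‖θ‖_F² over Π(μ1, μ2). -/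
noncomputable section

/-- The dual objective Φ(α1, α2). -/
def dualObj {n1 n2 : ℕ} (γ : ℝ) (μ1 : Fin n1 → ℝ) (μ2 : Fin n2 → ℝ)
    (c : Fin n1 → Fin n2 → ℝ) (α : (Fin n1 → ℝ) × (Fin n2 → ℝ)) : ℝ :=
  (∑ i, α.1 i * μ1 i) + (∑ j, α.2 j * μ2 j) -
    (1 / (2 * γ)) * ∑ i, ∑ j, (max (α.1 i + α.2 j - c i j) 0) ^ 2

/-- The primal objective of the regularized Hitchcock problem. -/
def primalObj {n1 n2 : ℕ} (γ : ℝ) (c θ : Fin n1 → Fin n2 → ℝ) : ℝ :=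
  frob c θ + γ / 2 * frob θ θ

namespace RHAux

/-! ### Scalar lemmas -/

lemma posq_lower (x y : ℝ) : (max y 0)^2 + 2 * max y 0 * (x - y) ≤ (max x 0)^2 := by
  rcases le_total y 0 with hy | hy
  · rw [max_eq_right hy]
    nlinarith [sq_nonneg (max x 0)]
  · rw [max_eq_left hy]
    rcases le_total x 0 with hx | hx
    · rw [max_eq_right hx]; nlinarith
    · rw [max_eq_left hx]; nlinarith [sq_nonneg (x - y)]

lemma posq_upper (x y : ℝ) : (max x 0)^2 ≤ (max y 0)^2 + 2 * max y 0 * (x - y) + (x - y)^2 := by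
  rcases le_total x 0 with hx | hx
  · rw [max_eq_right hx]
    nlinarith [sq_nonneg (max y 0 + x - y)]
  · rw [max_eq_left hx]
    rcases le_total y 0 with hy | hy
    · rw [max_eq_right hy]; nlinarith
    · rw [max_eq_left hy]; nlinarith

lemma young (γ x t : ℝ) (hγ : 0 < γ) (ht : 0 ≤ t) :
    x * t ≤ (1/(2*γ)) * (max x 0)^2 + γ/2 * t^2 := by
  have hm : x * t ≤ max x 0 * t := mul_le_mul_of_nonneg_right (le_max_left x 0) ht
  have h2γ : (0:ℝ) < 2*γ := by linarith
  have hd : max x 0 * t ≤ ((max x 0)^2 + γ^2*t^2)/(2*γ) :=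
    (le_div_iff₀ h2γ).mpr (by nlinarith [sq_nonneg (max x 0 - γ*t)])
  calc x * t ≤ max x 0 * t := hm
    _ ≤ ((max x 0)^2 + γ^2*t^2)/(2*γ) := hd
    _ = (1/(2*γ)) * (max x 0)^2 + γ/2 * t^2 := by field_simp

lemma mul_max_self (x : ℝ) : x * max x 0 = (max x 0)^2 := by
  rcases le_total x 0 with hx | hx
  · rw [max_eq_right hx]; ring
  · rw [max_eq_left hx]; ring

lemma eq_zero_of_quad (a K : ℝ) (hK : 0 < K) (h : ∀ t : ℝ, a*t - K*t^2 ≤ 0) : a = 0 := by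
  set t := a/(2*K) with ht
  have h2K : (2*K) ≠ 0 := by positivity
  have hta : 2*K*t = a := by rw [ht]; field_simp
  have h1 : a*t - K*t^2 ≤ 0 := h t
  have h2 : a*t - K*t^2 = K*t^2 := by rw [← hta]; ring
  have h3 : K*t^2 ≤ 0 := h2 ▸ h1
  have h4 : K*t^2 = 0 := le_antisymm h3 (mul_nonneg hK.le (sq_nonneg t))
  have ht0 : t = 0 := by
    have := (mul_eq_zero.mp h4).resolve_left (ne_of_gt hK)
    exact pow_eq_zero_iff (by norm_num) |>.mp this
  rw [← hta, ht0]; ring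

/-! ### One-dimensional clamping lemmas -/

lemma oneD_left {n : ℕ} (w : Fin n → ℝ) (μ γ a m : ℝ) (hμ : 0 ≤ μ)
    (ha : a ≤ m) (hm : ∀ k, m + w k ≤ 0) :
    a*μ - (1/(2*γ)) * ∑ k, (max (a + w k) 0)^2 ≤
      m*μ - (1/(2*γ)) * ∑ k, (max (m + w k) 0)^2 := by
  have h1 : ∀ k : Fin n, max (a + w k) 0 = 0 := fun k => max_eq_right (by linarith [hm k])
  have h2 : ∀ k : Fin n, max (m + w k) 0 = 0 := fun k => max_eq_right (hm k)
  simp only [h1, h2]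
  simp only [ne_eq, OfNat.ofNat_ne_zero, not_false_eq_true, zero_pow, Finset.sum_const_zero,
    mul_zero, sub_zero]
  nlinarith [mul_le_mul_of_nonneg_right ha hμ]

lemma oneD_right {n : ℕ} (w : Fin n → ℝ) (μ γ a m : ℝ) (hγ : 0 < γ) (hμ : 0 ≤ μ)
    (ha : m + γ*μ ≤ a) (k₀ : Fin n) (hk : w k₀ = -m) :
    a*μ - (1/(2*γ)) * ∑ k, (max (a + w k) 0)^2 ≤
      (m + γ*μ)*μ - (1/(2*γ)) * ∑ k, (max ((m + γ*μ) + w k) 0)^2 := by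
  set b := m + γ*μ with hb
  have h1 : ∀ k : Fin n, (max (b + w k) 0)^2 + 2 * max (b + w k) 0 * (a - b) ≤
      (max (a + w k) 0)^2 := by
    intro k
    have h := posq_lower (a + w k) (b + w k)
    have he : a + w k - (b + w k) = a - b := by ring
    rwa [he] at h
  have h2 : ∑ k, ((max (b + w k) 0)^2 + 2 * max (b + w k) 0 * (a - b)) ≤
      ∑ k, (max (a + w k) 0)^2 := Finset.sum_le_sum (fun k _ => h1 k)
  rw [Finset.sum_add_distrib] at h2
  have hbk : max (b + w k₀) 0 = γ*μ := by
    rw [hk]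
    have : b + -m = γ*μ := by rw [hb]; ring
    rw [this]
    exact max_eq_left (by positivity)
  have h3 : γ*μ ≤ ∑ k, max (b + w k) 0 := by
    rw [← hbk]
    exact Finset.single_le_sum (f := fun k => max (b + w k) 0)
      (fun k _ => le_max_right _ 0) (Finset.mem_univ k₀)
  have hab : 0 ≤ a - b := by linarith
  have hrw : ∑ k, (2 * max (b + w k) 0 * (a - b)) = 2*(a-b) * ∑ k, max (b + w k) 0 := by
    rw [Finset.mul_sum]
    exact Finset.sum_congr rfl fun k _ => by ring
  rw [hrw] at h2
  have h4 : 2*(a-b)*(γ*μ) ≤ 2*(a-b) * ∑ k, max (b + w k) 0 :=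
    mul_le_mul_of_nonneg_left h3 (by linarith)
  have h5 : ∑ k, (max (b + w k) 0)^2 + 2*(a-b)*(γ*μ) ≤ ∑ k, (max (a + w k) 0)^2 := by
    linarith
  have he : (0:ℝ) < 1/(2*γ) := by positivity
  have h6 := mul_le_mul_of_nonneg_left h5 he.le
  rw [mul_add] at h6
  have hg : (1/(2*γ)) * (2*(a-b)*(γ*μ)) = (a-b)*μ := by field_simp
  rw [hg] at h6
  nlinarith

lemma oneD_clamp {n : ℕ} (w : Fin n → ℝ) (μ γ a m : ℝ) (hγ : 0 < γ) (hμ : 0 ≤ μ)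
    (hm : ∀ k, m + w k ≤ 0) (k₀ : Fin n) (hk : w k₀ = -m) :
    (m ≤ max m (min a (m + γ*μ)) ∧ max m (min a (m + γ*μ)) ≤ m + γ*μ) ∧
    a*μ - (1/(2*γ)) * ∑ k, (max (a + w k) 0)^2 ≤
      (max m (min a (m + γ*μ)))*μ -
        (1/(2*γ)) * ∑ k, (max ((max m (min a (m + γ*μ))) + w k) 0)^2 := by
  have hmm : m ≤ m + γ*μ := by nlinarith
  rcases le_total a m with h | h
  · have hb : max m (min a (m + γ*μ)) = m := by
      rw [min_eq_left (le_trans h hmm), max_eq_left h]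
    rw [hb]
    exact ⟨⟨le_refl m, hmm⟩, oneD_left w μ γ a m hμ h hm⟩
  · rcases le_total a (m + γ*μ) with h2 | h2
    · have hb : max m (min a (m + γ*μ)) = a := by rw [min_eq_left h2, max_eq_right h]
      rw [hb]
      exact ⟨⟨h, h2⟩, le_refl _⟩
    · have hb : max m (min a (m + γ*μ)) = m + γ*μ := by
        rw [min_eq_right h2, max_eq_right hmm]
      rw [hb]
      exact ⟨⟨hmm, le_refl _⟩, oneD_right w μ γ a m hγ hμ h2 k₀ hk⟩

/-! ### Structure of the dual objective -/

variable {n1 n2 : ℕ} {γ : ℝ} {μ1 : Fin n1 → ℝ} {μ2 : Fin n2 → ℝ} {c : Fin n1 → Fin n2 → ℝ}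

lemma dualObj_fst (x : Fin n1 → ℝ) (α2 : Fin n2 → ℝ) :
    dualObj γ μ1 μ2 c (x, α2) = (∑ j, α2 j * μ2 j) +
      ∑ i, (x i * μ1 i - (1/(2*γ)) * ∑ j, (max (x i + α2 j - c i j) 0)^2) := by
  unfold dualObj
  dsimp only
  rw [Finset.sum_sub_distrib, ← Finset.mul_sum]
  ring

lemma dualObj_snd (α1 : Fin n1 → ℝ) (y : Fin n2 → ℝ) :
    dualObj γ μ1 μ2 c (α1, y) = (∑ i, α1 i * μ1 i) +
      ∑ j, (y j * μ2 j - (1/(2*γ)) * ∑ i, (max (α1 i + y j - c i j) 0)^2) := by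
  unfold dualObj
  dsimp only
  rw [Finset.sum_comm (f := fun i j => (max (α1 i + y j - c i j) 0)^2)]
  rw [Finset.sum_sub_distrib, ← Finset.mul_sum]
  ring

lemma dualObj_shift (hmass : (∑ i, μ1 i) = ∑ j, μ2 j) (α1 : Fin n1 → ℝ) (α2 : Fin n2 → ℝ)
    (s : ℝ) :
    dualObj γ μ1 μ2 c (fun i => α1 i + s, fun j => α2 j - s) = dualObj γ μ1 μ2 c (α1, α2) := by
  unfold dualObj
  dsimp only
  have h1 : ∑ i, (α1 i + s) * μ1 i = (∑ i, α1 i * μ1 i) + s * ∑ i, μ1 i := by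
    rw [Finset.mul_sum, ← Finset.sum_add_distrib]
    exact Finset.sum_congr rfl fun i _ => by ring
  have h2 : ∑ j, (α2 j - s) * μ2 j = (∑ j, α2 j * μ2 j) - s * ∑ j, μ2 j := by
    rw [Finset.mul_sum, ← Finset.sum_sub_distrib]
    exact Finset.sum_congr rfl fun j _ => by ring
  have h3 : ∀ (i : Fin n1) (j : Fin n2), α1 i + s + (α2 j - s) - c i j = α1 i + α2 j - c i j :=
    fun i j => by ring
  simp only [h3, h1, h2, hmass]
  ring

lemma sum_update {n : ℕ} (H : Fin n → ℝ → ℝ) (x : Fin n → ℝ) (i : Fin n) (b : ℝ) :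
    ∑ k, H k (Function.update x i b k) = (∑ k, H k (x k)) + (H i b - H i (x i)) := by
  have he : (fun k => H k (Function.update x i b k)) =
      Function.update (fun k => H k (x k)) i (H i b) := by
    funext k
    by_cases h : k = i
    · subst h; simp
    · simp [Function.update_of_ne h]
  rw [he, Finset.sum_update_of_mem (Finset.mem_univ i)]
  have := Finset.add_sum_erase Finset.univ (fun k => H k (x k)) (Finset.mem_univ i)
  rw [← Finset.erase_eq]
  linarith

lemma dualObj_continuous : Continuous (dualObj γ μ1 μ2 c) := by
  unfold dualObj
  apply Continuous.sub
  · apply Continuous.add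
    · exact continuous_finset_sum _ fun i _ =>
        ((continuous_apply i).comp continuous_fst).mul continuous_const
    · exact continuous_finset_sum _ fun j _ =>
        ((continuous_apply j).comp continuous_snd).mul continuous_const
  · apply Continuous.mul continuous_const
    exact continuous_finset_sum _ fun i _ => continuous_finset_sum _ fun j _ =>
      (((((continuous_apply i).comp continuous_fst).add
        ((continuous_apply j).comp continuous_snd)).sub continuous_const).max
          continuous_const).pow 2

/-! ### Coordinatewise improvement -/

lemma improve1 (hγ : 0 < γ) (hμ1 : ∀ i, 0 ≤ μ1 i)
    (h2 : (Finset.univ : Finset (Fin n2)).Nonempty) (α1 : Fin n1 → ℝ) (α2 : Fin n2 → ℝ) :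
    ∃ u : Fin n1 → ℝ,
      dualObj γ μ1 μ2 c (α1, α2) ≤ dualObj γ μ1 μ2 c (u, α2) ∧
      ∀ i, Finset.univ.inf' h2 (fun j => c i j - α2 j) ≤ u i ∧
        u i ≤ Finset.univ.inf' h2 (fun j => c i j - α2 j) + γ * μ1 i := by
  set m : Fin n1 → ℝ := fun i => Finset.univ.inf' h2 (fun j => c i j - α2 j) with hm
  refine ⟨fun i => max (m i) (min (α1 i) (m i + γ * μ1 i)), ?_, ?_⟩
  · rw [dualObj_fst, dualObj_fst]
    apply add_le_add_right
    apply Finset.sum_le_sum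
    intro i _
    obtain ⟨j₀, _, hj₀⟩ := Finset.exists_mem_eq_inf' h2 (fun j => c i j - α2 j)
    have hclamp := oneD_clamp (fun j => α2 j - c i j) (μ1 i) γ (α1 i) (m i) hγ (hμ1 i)
      (fun j => by
        have := Finset.inf'_le (fun j => c i j - α2 j) (Finset.mem_univ j)
        simp only [hm]
        linarith)
      j₀ (by simp only [hm]; rw [hj₀]; ring)
    have heq1 : ∀ (z : ℝ), ∑ j, (max (z + α2 j - c i j) 0)^2
        = ∑ j, (max (z + (α2 j - c i j)) 0)^2 := by
      intro z
      exact Finset.sum_congr rfl fun j _ => by rw [add_sub_assoc]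
    rw [heq1, heq1]
    exact hclamp.2
  · intro i
    obtain ⟨j₀, _, hj₀⟩ := Finset.exists_mem_eq_inf' h2 (fun j => c i j - α2 j)
    have hclamp := oneD_clamp (fun j => α2 j - c i j) (μ1 i) γ (α1 i) (m i) hγ (hμ1 i)
      (fun j => by
        have := Finset.inf'_le (fun j => c i j - α2 j) (Finset.mem_univ j)
        simp only [hm]
        linarith)
      j₀ (by simp only [hm]; rw [hj₀]; ring)
    exact hclamp.1

lemma improve2 (hγ : 0 < γ) (hμ2 : ∀ j, 0 ≤ μ2 j)
    (h1 : (Finset.univ : Finset (Fin n1)).Nonempty) (α1 : Fin n1 → ℝ) (α2 : Fin n2 → ℝ) :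
    ∃ v : Fin n2 → ℝ,
      dualObj γ μ1 μ2 c (α1, α2) ≤ dualObj γ μ1 μ2 c (α1, v) ∧
      ∀ j, Finset.univ.inf' h1 (fun i => c i j - α1 i) ≤ v j ∧
        v j ≤ Finset.univ.inf' h1 (fun i => c i j - α1 i) + γ * μ2 j := by
  set m : Fin n2 → ℝ := fun j => Finset.univ.inf' h1 (fun i => c i j - α1 i) with hm
  refine ⟨fun j => max (m j) (min (α2 j) (m j + γ * μ2 j)), ?_, ?_⟩
  · rw [dualObj_snd, dualObj_snd]
    apply add_le_add_right
    apply Finset.sum_le_sum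
    intro j _
    obtain ⟨i₀, _, hi₀⟩ := Finset.exists_mem_eq_inf' h1 (fun i => c i j - α1 i)
    have hclamp := oneD_clamp (fun i => α1 i - c i j) (μ2 j) γ (α2 j) (m j) hγ (hμ2 j)
      (fun i => by
        have := Finset.inf'_le (fun i => c i j - α1 i) (Finset.mem_univ i)
        simp only [hm]
        linarith)
      i₀ (by simp only [hm]; rw [hi₀]; ring)
    have heq1 : ∀ (z : ℝ), ∑ i, (max (α1 i + z - c i j) 0)^2
        = ∑ i, (max (z + (α1 i - c i j)) 0)^2 := by
      intro z
      exact Finset.sum_congr rfl fun i _ => by ring_nf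
    rw [heq1, heq1]
    exact hclamp.2
  · intro j
    obtain ⟨i₀, _, hi₀⟩ := Finset.exists_mem_eq_inf' h1 (fun i => c i j - α1 i)
    have hclamp := oneD_clamp (fun i => α1 i - c i j) (μ2 j) γ (α2 j) (m j) hγ (hμ2 j)
      (fun i => by
        have := Finset.inf'_le (fun i => c i j - α1 i) (Finset.mem_univ i)
        simp only [hm]
        linarith)
      i₀ (by simp only [hm]; rw [hi₀]; ring)
    exact hclamp.1

lemma inf'_sub_le {n : ℕ} (h : (Finset.univ : Finset (Fin n)).Nonempty) (f g : Fin n → ℝ)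
    (D : ℝ) (hfg : ∀ k, f k - g k ≤ D) :
    Finset.univ.inf' h f - Finset.univ.inf' h g ≤ D := by
  obtain ⟨k₀, _, hk⟩ := Finset.exists_mem_eq_inf' h g
  have h1 : Finset.univ.inf' h f ≤ f k₀ := Finset.inf'_le f (Finset.mem_univ k₀)
  have := hfg k₀
  linarith

lemma exists_max (hn1 : 0 < n1) (hn2 : 0 < n2) (hγ : 0 < γ)
    (hμ1 : ∀ i, 0 ≤ μ1 i) (hμ2 : ∀ j, 0 ≤ μ2 j)
    (hmass : (∑ i, μ1 i) = ∑ j, μ2 j) :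
    ∃ α, ∀ β, dualObj γ μ1 μ2 c β ≤ dualObj γ μ1 μ2 c α := by
  have h1 : (Finset.univ : Finset (Fin n1)).Nonempty := ⟨⟨0, hn1⟩, Finset.mem_univ _⟩
  have h2 : (Finset.univ : Finset (Fin n2)).Nonempty := ⟨⟨0, hn2⟩, Finset.mem_univ _⟩
  set i₀ : Fin n1 := ⟨0, hn1⟩ with hi₀def
  -- constants
  set C : ℝ := Finset.univ.sup' h1 (fun i => Finset.univ.sup' h2 (fun j => |c i j|)) with hC
  have hCb : ∀ i j, |c i j| ≤ C := by
    intro i j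
    calc |c i j| ≤ Finset.univ.sup' h2 (fun j => |c i j|) :=
          Finset.le_sup' (fun j => |c i j|) (Finset.mem_univ j)
      _ ≤ C := Finset.le_sup' (fun i => Finset.univ.sup' h2 (fun j => |c i j|))
          (Finset.mem_univ i)
  have hC0 : 0 ≤ C := le_trans (abs_nonneg (c i₀ ⟨0, hn2⟩)) (hCb i₀ ⟨0, hn2⟩)
  set M : ℝ := ∑ i, μ1 i with hM
  have hM0 : 0 ≤ M := Finset.sum_nonneg fun i _ => hμ1 i
  have hμ1M : ∀ i, μ1 i ≤ M := fun i =>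
    Finset.single_le_sum (fun i _ => hμ1 i) (Finset.mem_univ i)
  have hμ2M : ∀ j, μ2 j ≤ M := fun j => by
    have := Finset.single_le_sum (fun j _ => hμ2 j) (Finset.mem_univ j)
    rw [← hmass] at this
    exact this
  set B : ℝ := 3*C + 2*(γ*M) with hB
  have hγM : 0 ≤ γ * M := mul_nonneg hγ.le hM0
  have hB0 : 0 ≤ B := by linarith
  -- compact set
  set K : Set ((Fin n1 → ℝ) × (Fin n2 → ℝ)) :=
    (Set.univ.pi fun _ => Set.Icc (-B) B) ×ˢ (Set.univ.pi fun _ => Set.Icc (-B) B) with hK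
  have hKc : IsCompact K :=
    (isCompact_univ_pi fun _ => isCompact_Icc).prod (isCompact_univ_pi fun _ => isCompact_Icc)
  have hKne : K.Nonempty := by
    refine ⟨(0, 0), ⟨fun i _ => ?_, fun j _ => ?_⟩⟩ <;>
      · show (0:ℝ) ∈ Set.Icc (-B) B
        exact Set.mem_Icc.mpr ⟨by linarith, hB0⟩
  obtain ⟨α, hαK, hαmax⟩ := hKc.exists_isMaxOn hKne dualObj_continuous.continuousOn
  refine ⟨α, ?_⟩
  rintro ⟨β1, β2⟩
  -- pipeline
  obtain ⟨v, hv1, hv2⟩ := improve2 (μ1 := μ1) (c := c) hγ hμ2 h1 β1 β2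
  obtain ⟨u, hu1, hu2⟩ := improve1 (μ2 := μ2) (c := c) hγ hμ1 h2 β1 v
  set s : ℝ := -(u i₀) with hs
  set U : Fin n1 → ℝ := fun i => u i + s with hU
  have hshift : dualObj γ μ1 μ2 c (U, fun j => v j - s) = dualObj γ μ1 μ2 c (u, v) :=
    dualObj_shift hmass u v s
  obtain ⟨V, hV1, hV2⟩ := improve2 (μ1 := μ1) (c := c) hγ hμ2 h1 U (fun j => v j - s)
  -- bounds on U
  have hUi₀ : U i₀ = 0 := by show u i₀ + s = 0; rw [hs]; ring
  have hUb : ∀ i, |U i| ≤ 2*C + γ*M := by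
    intro i
    have hui := hu2 i
    have hui₀ := hu2 i₀
    have hd1 : Finset.univ.inf' h2 (fun j => c i j - v j) -
        Finset.univ.inf' h2 (fun j => c i₀ j - v j) ≤ 2*C := by
      apply inf'_sub_le
      intro j
      have h := abs_le.mp (hCb i j)
      have h' := abs_le.mp (hCb i₀ j)
      show c i j - v j - (c i₀ j - v j) ≤ 2*C
      linarith [h.1, h.2, h'.1, h'.2]
    have hd2 : Finset.univ.inf' h2 (fun j => c i₀ j - v j) -
        Finset.univ.inf' h2 (fun j => c i j - v j) ≤ 2*C := by
      apply inf'_sub_le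
      intro j
      have h := abs_le.mp (hCb i j)
      have h' := abs_le.mp (hCb i₀ j)
      show c i₀ j - v j - (c i j - v j) ≤ 2*C
      linarith [h.1, h.2, h'.1, h'.2]
    have hUeq : U i = u i - u i₀ := by show u i + s = u i - u i₀; rw [hs]; ring
    have hgi : γ * μ1 i ≤ γ * M := mul_le_mul_of_nonneg_left (hμ1M i) hγ.le
    have hgi₀ : γ * μ1 i₀ ≤ γ * M := mul_le_mul_of_nonneg_left (hμ1M i₀) hγ.le
    rw [hUeq, abs_le]
    exact ⟨by linarith [hui.1, hui₀.2], by linarith [hui.2, hui₀.1]⟩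
  -- bounds on V
  have hVb : ∀ j, |V j| ≤ B := by
    intro j
    have hvj := hV2 j
    have hup : Finset.univ.inf' h1 (fun i => c i j - U i) ≤ C := by
      have hle : Finset.univ.inf' h1 (fun i => c i j - U i) ≤ c i₀ j - U i₀ :=
        Finset.inf'_le _ (Finset.mem_univ i₀)
      have h := abs_le.mp (hCb i₀ j)
      rw [hUi₀] at hle
      linarith [h.2]
    have hlo : -(3*C + γ*M) ≤ Finset.univ.inf' h1 (fun i => c i j - U i) := by
      obtain ⟨i₁, _, hi₁⟩ := Finset.exists_mem_eq_inf' h1 (fun i => c i j - U i)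
      rw [hi₁]
      have h := abs_le.mp (hCb i₁ j)
      have h2' := abs_le.mp (hUb i₁)
      linarith [h.1, h2'.2]
    have hgj : γ * μ2 j ≤ γ * M := mul_le_mul_of_nonneg_left (hμ2M j) hγ.le
    have hg0 : 0 ≤ γ * μ2 j := mul_nonneg hγ.le (hμ2 j)
    rw [abs_le, hB]
    exact ⟨by linarith [hvj.1], by linarith [hvj.2]⟩
  have hmem : (U, V) ∈ K := by
    rw [hK]
    constructor
    · intro i _
      have := hUb i
      rw [abs_le] at this
      exact Set.mem_Icc.mpr ⟨by simp only [hB]; linarith [this.1], by simp only [hB]; linarith [this.2]⟩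
    · intro j _
      have := hVb j
      rw [abs_le] at this
      exact Set.mem_Icc.mpr ⟨this.1, this.2⟩
  calc dualObj γ μ1 μ2 c (β1, β2) ≤ dualObj γ μ1 μ2 c (β1, v) := hv1
    _ ≤ dualObj γ μ1 μ2 c (u, v) := hu1
    _ = dualObj γ μ1 μ2 c (U, fun j => v j - s) := hshift.symm
    _ ≤ dualObj γ μ1 μ2 c (U, V) := hV1
    _ ≤ dualObj γ μ1 μ2 c α := hαmax hmem


lemma foc1 (hγ : 0 < γ) (hn2 : 0 < n2) (α : (Fin n1 → ℝ) × (Fin n2 → ℝ))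
    (hmax : ∀ β, dualObj γ μ1 μ2 c β ≤ dualObj γ μ1 μ2 c α) (i : Fin n1) :
    ∑ j, max (α.1 i + α.2 j - c i j) 0 = γ * μ1 i := by
  set S : ℝ := ∑ j, max (α.1 i + α.2 j - c i j) 0 with hS
  set P : ℝ := ∑ j, (max (α.1 i + α.2 j - c i j) 0)^2 with hP
  have key : ∀ t : ℝ, μ1 i * t - (1/(2*γ)) * (2*t*S + n2*t^2) ≤ 0 := by
    intro t
    have h := hmax (Function.update α.1 i (α.1 i + t), α.2)
    rw [dualObj_fst] at h
    rw [show α = (α.1, α.2) from rfl, dualObj_fst] at h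
    rw [sum_update (fun k a => a * μ1 k - (1/(2*γ)) * ∑ j, (max (a + α.2 j - c k j) 0)^2)
      α.1 i (α.1 i + t)] at h
    have h2 : (α.1 i + t) * μ1 i - (1/(2*γ)) * ∑ j, (max (α.1 i + t + α.2 j - c i j) 0)^2 ≤
        α.1 i * μ1 i - (1/(2*γ)) * P := by
      rw [hP]
      dsimp only at h
      linarith
    have h3 : ∑ j, (max (α.1 i + t + α.2 j - c i j) 0)^2 ≤ P + (2*t*S + n2*t^2) := by
      have hb : ∀ j : Fin n2, (max (α.1 i + t + α.2 j - c i j) 0)^2 ≤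
          (max (α.1 i + α.2 j - c i j) 0)^2 + 2*(max (α.1 i + α.2 j - c i j) 0)*t + t^2 := by
        intro j
        have hp := posq_upper (α.1 i + t + α.2 j - c i j) (α.1 i + α.2 j - c i j)
        have he : α.1 i + t + α.2 j - c i j - (α.1 i + α.2 j - c i j) = t := by ring
        rw [he] at hp
        linarith
      calc ∑ j, (max (α.1 i + t + α.2 j - c i j) 0)^2
          ≤ ∑ j, ((max (α.1 i + α.2 j - c i j) 0)^2 +
              2*(max (α.1 i + α.2 j - c i j) 0)*t + t^2) := Finset.sum_le_sum fun j _ => hb j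
        _ = P + (2*t*S + n2*t^2) := by
            rw [Finset.sum_add_distrib, Finset.sum_add_distrib, Finset.sum_const,
              Finset.card_univ, Fintype.card_fin, hP, hS]
            rw [← Finset.sum_mul, ← Finset.mul_sum]
            -- (cast already normalized)
            ring
    have hpos : (0:ℝ) < 1/(2*γ) := by positivity
    nlinarith [mul_le_mul_of_nonneg_left h3 hpos.le]
  have hK : (0:ℝ) < (n2:ℝ)/(2*γ) := by
    have : (0:ℝ) < (n2:ℝ) := by exact_mod_cast hn2
    positivity
  have ha : μ1 i - S/γ = 0 := by
    apply eq_zero_of_quad _ _ hK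
    intro t
    have := key t
    have heq : μ1 i * t - (1/(2*γ)) * (2*t*S + n2*t^2) = (μ1 i - S/γ)*t - ((n2:ℝ)/(2*γ))*t^2 := by
      field_simp
      ring
    linarith [heq ▸ this]
  have hγ' : γ ≠ 0 := ne_of_gt hγ
  field_simp at ha
  linarith

lemma foc2 (hγ : 0 < γ) (hn1 : 0 < n1) (α : (Fin n1 → ℝ) × (Fin n2 → ℝ))
    (hmax : ∀ β, dualObj γ μ1 μ2 c β ≤ dualObj γ μ1 μ2 c α) (j : Fin n2) :
    ∑ i, max (α.1 i + α.2 j - c i j) 0 = γ * μ2 j := by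
  set S : ℝ := ∑ i, max (α.1 i + α.2 j - c i j) 0 with hS
  set P : ℝ := ∑ i, (max (α.1 i + α.2 j - c i j) 0)^2 with hP
  have key : ∀ t : ℝ, μ2 j * t - (1/(2*γ)) * (2*t*S + n1*t^2) ≤ 0 := by
    intro t
    have h := hmax (α.1, Function.update α.2 j (α.2 j + t))
    rw [dualObj_snd] at h
    rw [show α = (α.1, α.2) from rfl, dualObj_snd] at h
    rw [sum_update (fun k a => a * μ2 k - (1/(2*γ)) * ∑ i, (max (α.1 i + a - c i k) 0)^2)
      α.2 j (α.2 j + t)] at h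
    have h2 : (α.2 j + t) * μ2 j - (1/(2*γ)) * ∑ i, (max (α.1 i + (α.2 j + t) - c i j) 0)^2 ≤
        α.2 j * μ2 j - (1/(2*γ)) * P := by
      rw [hP]
      dsimp only at h
      linarith
    have h3 : ∑ i, (max (α.1 i + (α.2 j + t) - c i j) 0)^2 ≤ P + (2*t*S + n1*t^2) := by
      have hb : ∀ i : Fin n1, (max (α.1 i + (α.2 j + t) - c i j) 0)^2 ≤
          (max (α.1 i + α.2 j - c i j) 0)^2 + 2*(max (α.1 i + α.2 j - c i j) 0)*t + t^2 := by
        intro i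
        have hp := posq_upper (α.1 i + (α.2 j + t) - c i j) (α.1 i + α.2 j - c i j)
        have he : α.1 i + (α.2 j + t) - c i j - (α.1 i + α.2 j - c i j) = t := by ring
        rw [he] at hp
        linarith
      calc ∑ i, (max (α.1 i + (α.2 j + t) - c i j) 0)^2
          ≤ ∑ i, ((max (α.1 i + α.2 j - c i j) 0)^2 +
              2*(max (α.1 i + α.2 j - c i j) 0)*t + t^2) := Finset.sum_le_sum fun i _ => hb i
        _ = P + (2*t*S + n1*t^2) := by
            rw [Finset.sum_add_distrib, Finset.sum_add_distrib, Finset.sum_const,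
              Finset.card_univ, Fintype.card_fin, hP, hS]
            rw [← Finset.sum_mul, ← Finset.mul_sum]
            -- (cast already normalized)
            ring
    have hpos : (0:ℝ) < 1/(2*γ) := by positivity
    nlinarith [mul_le_mul_of_nonneg_left h3 hpos.le]
  have hK : (0:ℝ) < (n1:ℝ)/(2*γ) := by
    have : (0:ℝ) < (n1:ℝ) := by exact_mod_cast hn1
    positivity
  have ha : μ2 j - S/γ = 0 := by
    apply eq_zero_of_quad _ _ hK
    intro t
    have := key t
    have heq : μ2 j * t - (1/(2*γ)) * (2*t*S + n1*t^2) = (μ2 j - S/γ)*t - ((n1:ℝ)/(2*γ))*t^2 := by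
      field_simp
      ring
    linarith [heq ▸ this]
  have hγ' : γ ≠ 0 := ne_of_gt hγ
  field_simp at ha
  linarith


lemma weak_duality (hγ : 0 < γ) (β : (Fin n1 → ℝ) × (Fin n2 → ℝ))
    (θ : Fin n1 → Fin n2 → ℝ) (hθ : θ ∈ transportPolytope μ1 μ2) :
    dualObj γ μ1 μ2 c β ≤ primalObj γ c θ := by
  obtain ⟨hpos, hrow, hcol⟩ := hθ
  obtain ⟨β1, β2⟩ := β
  have hsum : ∑ i, ∑ j, ((β1 i + β2 j - c i j) * θ i j) ≤
      ∑ i, ∑ j, ((1/(2*γ)) * (max (β1 i + β2 j - c i j) 0)^2 + γ/2 * (θ i j)^2) :=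
    Finset.sum_le_sum fun i _ => Finset.sum_le_sum fun j _ =>
      young γ _ _ hγ (hpos i j)
  have hL : ∑ i, ∑ j, ((β1 i + β2 j - c i j) * θ i j) =
      (∑ i, β1 i * μ1 i) + (∑ j, β2 j * μ2 j) - frob c θ := by
    have e1 : ∑ i, ∑ j, ((β1 i + β2 j - c i j) * θ i j) =
        ∑ i, ∑ j, (β1 i * θ i j + β2 j * θ i j - c i j * θ i j) :=
      Finset.sum_congr rfl fun i _ => Finset.sum_congr rfl fun j _ => by ring
    rw [e1]
    have e2 : ∀ i : Fin n1, ∑ j, (β1 i * θ i j + β2 j * θ i j - c i j * θ i j) =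
        ∑ j, (β1 i * θ i j) + ∑ j, (β2 j * θ i j) - ∑ j, (c i j * θ i j) := fun i => by
      rw [Finset.sum_sub_distrib, Finset.sum_add_distrib]
    simp only [e2]
    rw [Finset.sum_sub_distrib, Finset.sum_add_distrib]
    have e3 : ∑ i, ∑ j, (β1 i * θ i j) = ∑ i, β1 i * μ1 i :=
      Finset.sum_congr rfl fun i _ => by rw [← Finset.mul_sum, hrow i]
    have e4 : ∑ i, ∑ j, (β2 j * θ i j) = ∑ j, β2 j * μ2 j := by
      rw [Finset.sum_comm]
      exact Finset.sum_congr rfl fun j _ => by rw [← Finset.mul_sum, hcol j]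
    rw [e3, e4]
    rfl
  have hR : ∑ i, ∑ j, ((1/(2*γ)) * (max (β1 i + β2 j - c i j) 0)^2 + γ/2 * (θ i j)^2) =
      (1/(2*γ)) * (∑ i, ∑ j, (max (β1 i + β2 j - c i j) 0)^2) + γ/2 * frob θ θ := by
    have hfrob : frob θ θ = ∑ i, ∑ j, (θ i j)^2 :=
      Finset.sum_congr rfl fun i _ => Finset.sum_congr rfl fun j _ => by ring
    have e1 : ∀ i : Fin n1, ∑ j, ((1/(2*γ)) * (max (β1 i + β2 j - c i j) 0)^2
        + γ/2 * (θ i j)^2) = (1/(2*γ)) * (∑ j, (max (β1 i + β2 j - c i j) 0)^2)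
        + γ/2 * ∑ j, (θ i j)^2 := fun i => by
      rw [Finset.sum_add_distrib, ← Finset.mul_sum, ← Finset.mul_sum]
    simp only [e1]
    rw [Finset.sum_add_distrib, ← Finset.mul_sum, ← Finset.mul_sum, hfrob]
  rw [hL, hR] at hsum
  unfold dualObj primalObj
  dsimp only
  linarith


end RHAux

/-- The dual of the regularized Hitchcock problem attains its maximum and
strong duality holds. -/
theorem regularized_hitchcock_strong_duality (n1 n2 : ℕ) (hn1 : 0 < n1) (hn2 : 0 < n2)
    (γ : ℝ) (hγ : 0 < γ)
    (μ1 : Fin n1 → ℝ) (μ2 : Fin n2 → ℝ) (c : Fin n1 → Fin n2 → ℝ)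
    (hμ1 : ∀ i, 0 ≤ μ1 i) (hμ2 : ∀ j, 0 ≤ μ2 j)
    (hmass : (∑ i, μ1 i) = ∑ j, μ2 j) :
    ∃ α : (Fin n1 → ℝ) × (Fin n2 → ℝ),
      (∀ β : (Fin n1 → ℝ) × (Fin n2 → ℝ), dualObj γ μ1 μ2 c β ≤ dualObj γ μ1 μ2 c α) ∧
      ∃ π ∈ transportPolytope μ1 μ2,
        (∀ θ ∈ transportPolytope μ1 μ2, primalObj γ c π ≤ primalObj γ c θ) ∧
        dualObj γ μ1 μ2 c α = primalObj γ c π := by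
  obtain ⟨α, hmax⟩ := RHAux.exists_max hn1 hn2 hγ hμ1 hμ2 hmass (c := c)
  have hγ' : γ ≠ 0 := ne_of_gt hγ
  have hrowS : ∀ i, ∑ j, max (α.1 i + α.2 j - c i j) 0 = γ * μ1 i :=
    RHAux.foc1 hγ hn2 α hmax
  have hcolS : ∀ j, ∑ i, max (α.1 i + α.2 j - c i j) 0 = γ * μ2 j :=
    RHAux.foc2 hγ hn1 α hmax
  set π : Fin n1 → Fin n2 → ℝ := fun i j => max (α.1 i + α.2 j - c i j) 0 / γ with hπ
  have hπrow : ∀ i, ∑ j, π i j = μ1 i := by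
    intro i
    simp only [hπ]
    rw [← Finset.sum_div, hrowS i]
    field_simp
  have hπcol : ∀ j, ∑ i, π i j = μ2 j := by
    intro j
    simp only [hπ]
    rw [← Finset.sum_div, hcolS j]
    field_simp
  have hπmem : π ∈ transportPolytope μ1 μ2 :=
    ⟨fun i j => div_nonneg (le_max_right _ 0) hγ.le, hπrow, hπcol⟩
  set P : ℝ := ∑ i, ∑ j, (max (α.1 i + α.2 j - c i j) 0)^2 with hP
  have hfrobπ : frob π π = P / γ^2 := by
    unfold frob
    rw [hP]
    simp_rw [Finset.sum_div]
    refine Finset.sum_congr rfl fun i _ => Finset.sum_congr rfl fun j _ => ?_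
    simp only [hπ]
    rw [div_mul_div_comm]
    congr 1
    · ring
    · ring
  have hfrobc : frob c π = (∑ i, α.1 i * μ1 i) + (∑ j, α.2 j * μ2 j) - P/γ := by
    have hterm : ∀ (i : Fin n1) (j : Fin n2), c i j * π i j =
        α.1 i * π i j + α.2 j * π i j - (max (α.1 i + α.2 j - c i j) 0)^2 / γ := by
      intro i j
      have hx : (α.1 i + α.2 j - c i j) * π i j = (max (α.1 i + α.2 j - c i j) 0)^2 / γ := by
        simp only [hπ]
        rw [← mul_div_assoc, RHAux.mul_max_self]
      have : c i j * π i j = α.1 i * π i j + α.2 j * π i j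
          - (α.1 i + α.2 j - c i j) * π i j := by ring
      rw [this, hx]
    unfold frob
    simp_rw [hterm]
    have e1 : ∑ i, ∑ j, (α.1 i * π i j) = ∑ i, α.1 i * μ1 i :=
      Finset.sum_congr rfl fun i _ => by rw [← Finset.mul_sum, hπrow i]
    have e2 : ∑ i, ∑ j, (α.2 j * π i j) = ∑ j, α.2 j * μ2 j := by
      rw [Finset.sum_comm]
      exact Finset.sum_congr rfl fun j _ => by rw [← Finset.mul_sum, hπcol j]
    have e3 : ∑ i, ∑ j, ((max (α.1 i + α.2 j - c i j) 0)^2/γ) = P/γ := by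
      rw [hP]
      simp_rw [← Finset.sum_div]
    calc ∑ i, ∑ j, (α.1 i * π i j + α.2 j * π i j - (max (α.1 i + α.2 j - c i j) 0)^2/γ)
        = (∑ i, ∑ j, (α.1 i * π i j)) + (∑ i, ∑ j, (α.2 j * π i j))
          - ∑ i, ∑ j, ((max (α.1 i + α.2 j - c i j) 0)^2/γ) := by
          simp_rw [Finset.sum_sub_distrib, Finset.sum_add_distrib]
      _ = (∑ i, α.1 i * μ1 i) + (∑ j, α.2 j * μ2 j) - P/γ := by rw [e1, e2, e3]
  have hfinal : dualObj γ μ1 μ2 c α = primalObj γ c π := by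
    unfold primalObj
    rw [hfrobc, hfrobπ]
    unfold dualObj
    rw [← hP]
    field_simp
    ring
  refine ⟨α, hmax, π, hπmem, fun θ hθ => ?_, hfinal⟩
  rw [← hfinal]
  exact RHAux.weak_duality hγ α θ hθ
end
end

section
/- Let n1, n2 be positive integers, let γ > 0 and ε > 0, and let c ∈ ℝ^{n1×n2}. Then for every μ1 ∈ ℝ^{n1} and μ2 ∈ ℝ^{n2} (with no sign or mass restriction on μ1, μ2), there exists exactly one pair (α1, α2) ∈ ℝ^{n1} × ℝ^{n2} satisfying the regularized dual system: Σ_j max((α1)_i + (α2)_j − c_{ij}, 0) + γ ε (α1)_i = γ (μ1)_i for all i = 1,…,n1, and Σ_i max((α1)_i + (α2)_j − c_{ij}, 0) + γ ε (α2)_j = γ (μ2)_j for all j = 1,…,n2. -/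
noncomputable section

namespace RegDualAux

/-- `q x = max(x,0)^2/2`, the antiderivative of `max (·) 0`. -/
def q (x : ℝ) : ℝ := max x 0 ^ 2 / 2

lemma q_nonneg (x : ℝ) : 0 ≤ q x := by unfold q; positivity

lemma continuous_q : Continuous q :=
  ((continuous_id.max continuous_const).pow 2).div_const 2

lemma hasDerivAt_q (x : ℝ) : HasDerivAt q (max x 0) x := by
  rcases lt_trichotomy x 0 with hx | hx | hx
  · have heq : q =ᶠ[nhds x] fun _ => (0:ℝ) := by
      filter_upwards [Iio_mem_nhds hx] with y hy
      simp [q, max_eq_right (le_of_lt (Set.mem_Iio.1 hy))]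
    rw [max_eq_right hx.le]
    exact (hasDerivAt_const x (0:ℝ)).congr_of_eventuallyEq heq
  · subst hx
    rw [max_self]
    rw [hasDerivAt_iff_isLittleO]
    simp only [smul_zero, sub_zero, q, max_self, ne_eq, OfNat.ofNat_ne_zero,
      not_false_eq_true, zero_pow, zero_div]
    rw [Asymptotics.isLittleO_iff]
    intro ccc hc
    filter_upwards [Metric.ball_mem_nhds (0:ℝ) (by positivity : (0:ℝ) < 2*ccc)] with y hy
    rw [Metric.mem_ball, Real.dist_eq, sub_zero] at hy
    have h1 : max y 0 ≤ |y| := max_le (le_abs_self y) (abs_nonneg y)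
    have h2 : (0:ℝ) ≤ max y 0 := le_max_right y 0
    rw [Real.norm_eq_abs, Real.norm_eq_abs, abs_of_nonneg (by positivity : (0:ℝ) ≤ max y 0 ^2/2)]
    nlinarith [abs_nonneg y]
  · have heq : q =ᶠ[nhds x] fun y => y^2/2 := by
      filter_upwards [Ioi_mem_nhds hx] with y hy
      simp [q, max_eq_left (le_of_lt (Set.mem_Ioi.1 hy))]
    rw [max_eq_left hx.le]
    have h := (hasDerivAt_pow 2 x).div_const 2
    have h' : HasDerivAt (fun y : ℝ => y^2/2) x x := by
      exact h.congr_deriv (by push_cast; ring)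
    exact h'.congr_of_eventuallyEq heq

lemma compl_max (u : ℝ) : max u 0 * (max u 0 - u) = 0 := by
  rcases le_total u 0 with h | h
  · simp [max_eq_right h]
  · simp [max_eq_left h]

lemma mono_max (u v : ℝ) : 0 ≤ (max u 0 - max v 0) * (u - v) := by
  nlinarith [compl_max u, compl_max v, le_max_left u 0, le_max_right u 0,
    le_max_left v 0, le_max_right v 0, sq_nonneg (max u 0 - max v 0)]

lemma sum_update_split {n : ℕ} (f : Fin n → ℝ) (i : Fin n) (t : ℝ) (F : Fin n → ℝ → ℝ) :
    ∑ i', F i' (Function.update f i t i')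
      = F i t + ∑ i' ∈ Finset.univ.erase i, F i' (f i') := by
  rw [← Finset.add_sum_erase Finset.univ (fun i' => F i' (Function.update f i t i'))
    (Finset.mem_univ i)]
  congr 1
  · rw [Function.update_self]
  · exact Finset.sum_congr rfl fun i' hi' => by
      rw [Function.update_of_ne (Finset.mem_erase.1 hi').1]

/-- The potential whose critical points are solutions of the dual system. -/
def Phi {n1 n2 : ℕ} (γ ε : ℝ) (c : Fin n1 → Fin n2 → ℝ) (μ1 : Fin n1 → ℝ) (μ2 : Fin n2 → ℝ)
    (α : (Fin n1 → ℝ) × (Fin n2 → ℝ)) : ℝ :=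
  (∑ i, ∑ j, q (α.1 i + α.2 j - c i j))
    + γ * ε / 2 * ((∑ i, (α.1 i)^2) + (∑ j, (α.2 j)^2))
    - γ * ((∑ i, μ1 i * α.1 i) + (∑ j, μ2 j * α.2 j))

lemma continuous_Phi {n1 n2 : ℕ} (γ ε : ℝ) (c : Fin n1 → Fin n2 → ℝ)
    (μ1 : Fin n1 → ℝ) (μ2 : Fin n2 → ℝ) : Continuous (Phi γ ε c μ1 μ2) := by
  unfold Phi
  apply Continuous.sub
  · apply Continuous.add
    · apply continuous_finset_sum; intro i _
      apply continuous_finset_sum; intro j _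
      exact continuous_q.comp ((((continuous_apply i).comp continuous_fst).add
        ((continuous_apply j).comp continuous_snd)).sub continuous_const)
    · apply Continuous.mul continuous_const
      apply Continuous.add
      · exact continuous_finset_sum _ fun i _ => ((continuous_apply i).comp continuous_fst).pow 2
      · exact continuous_finset_sum _ fun j _ => ((continuous_apply j).comp continuous_snd).pow 2
  · apply Continuous.mul continuous_const
    apply Continuous.add
    · exact continuous_finset_sum _ fun i _ =>
        (continuous_const.mul ((continuous_apply i).comp continuous_fst))
    · exact continuous_finset_sum _ fun j _ =>
        (continuous_const.mul ((continuous_apply j).comp continuous_snd))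

lemma Phi_coercive {n1 n2 : ℕ} {γ ε : ℝ} (hγ : 0 < γ) (hε : 0 < ε)
    (c : Fin n1 → Fin n2 → ℝ) (μ1 : Fin n1 → ℝ) (μ2 : Fin n2 → ℝ)
    (x : (Fin n1 → ℝ) × (Fin n2 → ℝ)) :
    γ * ε / 4 * ((∑ i, (x.1 i)^2) + (∑ j, (x.2 j)^2))
      - ((∑ i, γ/ε*(μ1 i)^2) + (∑ j, γ/ε*(μ2 j)^2)) ≤ Phi γ ε c μ1 μ2 x := by
  have per : ∀ a m : ℝ, γ*ε/4*a^2 - γ/ε*m^2 ≤ γ*ε/2*a^2 - γ*(m*a) := by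
    intro a m
    have h : γ*ε/2*a^2 - γ*(m*a) - (γ*ε/4*a^2 - γ/ε*m^2) = γ/(4*ε)*(ε*a - 2*m)^2 := by
      field_simp; ring
    nlinarith [mul_nonneg (div_nonneg hγ.le (by linarith : (0:ℝ) ≤ 4*ε))
      (sq_nonneg (ε*a - 2*m))]
  have hQ : 0 ≤ ∑ i, ∑ j, q (x.1 i + x.2 j - c i j) :=
    Finset.sum_nonneg fun i _ => Finset.sum_nonneg fun j _ => q_nonneg _
  have h1 : ∑ i, (γ*ε/4*(x.1 i)^2 - γ/ε*(μ1 i)^2) ≤ ∑ i, (γ*ε/2*(x.1 i)^2 - γ*(μ1 i * x.1 i)) :=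
    Finset.sum_le_sum fun i _ => per _ _
  have h2 : ∑ j, (γ*ε/4*(x.2 j)^2 - γ/ε*(μ2 j)^2) ≤ ∑ j, (γ*ε/2*(x.2 j)^2 - γ*(μ2 j * x.2 j)) :=
    Finset.sum_le_sum fun j _ => per _ _
  have e1 : ∀ (n : ℕ) (v m : Fin n → ℝ) (A B : ℝ),
      ∑ i, (A*(v i)^2 - B*(m i * v i)) = A*(∑ i, (v i)^2) - B*(∑ i, m i * v i) := by
    intro n v m A B
    rw [Finset.sum_sub_distrib, Finset.mul_sum, Finset.mul_sum]
  have e2 : ∀ (n : ℕ) (v m : Fin n → ℝ) (A C : ℝ),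
      ∑ i, (A*(v i)^2 - C*(m i)^2) = A*(∑ i, (v i)^2) - ∑ i, C*(m i)^2 := by
    intro n v m A C
    rw [Finset.sum_sub_distrib, Finset.mul_sum]
  rw [e1 _ _ _ _ _, e2 _ _ _ _ _] at h1 h2
  unfold Phi
  linarith

lemma row_eq {n1 n2 : ℕ} {γ ε : ℝ}
    (c : Fin n1 → Fin n2 → ℝ) (μ1 : Fin n1 → ℝ) (μ2 : Fin n2 → ℝ)
    (αs : (Fin n1 → ℝ) × (Fin n2 → ℝ))
    (hmin : ∀ x, Phi γ ε c μ1 μ2 αs ≤ Phi γ ε c μ1 μ2 x) (i : Fin n1) :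
    (∑ j, max (αs.1 i + αs.2 j - c i j) 0) + γ * ε * αs.1 i = γ * μ1 i := by
  set Ci : ℝ :=
    (∑ i' ∈ Finset.univ.erase i, ∑ j, q (αs.1 i' + αs.2 j - c i' j))
      + γ * ε / 2 * ((∑ i' ∈ Finset.univ.erase i, (αs.1 i')^2) + ∑ j, (αs.2 j)^2)
      - γ * ((∑ i' ∈ Finset.univ.erase i, μ1 i' * αs.1 i') + ∑ j, μ2 j * αs.2 j) with hCi
  have hge : (fun t => Phi γ ε c μ1 μ2 (Function.update αs.1 i t, αs.2))
      = fun t => ((∑ j, q (t + αs.2 j - c i j)) + γ*ε/2*t^2 - γ*(μ1 i)*t) + Ci := by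
    funext t
    have h1 := sum_update_split αs.1 i t (fun i' x => ∑ j, q (x + αs.2 j - c i' j))
    have h2 := sum_update_split αs.1 i t (fun _ x => x^2)
    have h3 := sum_update_split αs.1 i t (fun i' x => μ1 i' * x)
    simp only [Phi, h1, h2, h3, hCi]
    ring
  have hA : HasDerivAt (fun t => (∑ j, q (t + αs.2 j - c i j)) + γ*ε/2*t^2 - γ*(μ1 i)*t)
      ((∑ j, max (αs.1 i + αs.2 j - c i j) 0) + γ*ε*(αs.1 i) - γ*(μ1 i)) (αs.1 i) := by
    have hsum : HasDerivAt (fun t => ∑ j, q (t + αs.2 j - c i j))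
        (∑ j, max (αs.1 i + αs.2 j - c i j) 0) (αs.1 i) := by
      apply HasDerivAt.fun_sum
      intro j _
      have hin : HasDerivAt (fun t : ℝ => t + αs.2 j - c i j) 1 (αs.1 i) := by
        simpa using ((hasDerivAt_id (αs.1 i)).add_const (αs.2 j)).sub_const (c i j)
      have := (hasDerivAt_q (αs.1 i + αs.2 j - c i j)).comp (αs.1 i) hin
      exact this.congr_deriv (mul_one _)
    have hq2 : HasDerivAt (fun t : ℝ => γ*ε/2*t^2) (γ*ε*(αs.1 i)) (αs.1 i) := by
      have := (hasDerivAt_pow 2 (αs.1 i)).const_mul (γ*ε/2)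
      exact this.congr_deriv (by push_cast; ring)
    have hl : HasDerivAt (fun t : ℝ => γ*(μ1 i)*t) (γ*(μ1 i)) (αs.1 i) := by
      simpa using (hasDerivAt_id (αs.1 i)).const_mul (γ*(μ1 i))
    exact (hsum.add hq2).sub hl
  have hd : HasDerivAt (fun t => Phi γ ε c μ1 μ2 (Function.update αs.1 i t, αs.2))
      ((∑ j, max (αs.1 i + αs.2 j - c i j) 0) + γ*ε*(αs.1 i) - γ*(μ1 i)) (αs.1 i) := by
    rw [hge]; exact hA.add_const Ci
  have hloc : IsLocalMin (fun t => Phi γ ε c μ1 μ2 (Function.update αs.1 i t, αs.2)) (αs.1 i) := by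
    apply Filter.Eventually.of_forall
    intro t
    have hupd : Function.update αs.1 i (αs.1 i) = αs.1 := Function.update_eq_self i αs.1
    simp only [hupd]
    exact hmin _
  have h0 := hloc.hasDerivAt_eq_zero hd
  linarith

lemma col_eq {n1 n2 : ℕ} {γ ε : ℝ}
    (c : Fin n1 → Fin n2 → ℝ) (μ1 : Fin n1 → ℝ) (μ2 : Fin n2 → ℝ)
    (αs : (Fin n1 → ℝ) × (Fin n2 → ℝ))
    (hmin : ∀ x, Phi γ ε c μ1 μ2 αs ≤ Phi γ ε c μ1 μ2 x) (j : Fin n2) :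
    (∑ i, max (αs.1 i + αs.2 j - c i j) 0) + γ * ε * αs.2 j = γ * μ2 j := by
  set Cj : ℝ :=
    (∑ j' ∈ Finset.univ.erase j, ∑ i, q (αs.1 i + αs.2 j' - c i j'))
      + γ * ε / 2 * ((∑ i, (αs.1 i)^2) + ∑ j' ∈ Finset.univ.erase j, (αs.2 j')^2)
      - γ * ((∑ i, μ1 i * αs.1 i) + ∑ j' ∈ Finset.univ.erase j, μ2 j' * αs.2 j') with hCj
  have hge : (fun t => Phi γ ε c μ1 μ2 (αs.1, Function.update αs.2 j t))
      = fun t => ((∑ i, q (αs.1 i + t - c i j)) + γ*ε/2*t^2 - γ*(μ2 j)*t) + Cj := by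
    funext t
    have h1 : ∑ i, ∑ j', q (αs.1 i + Function.update αs.2 j t j' - c i j')
        = (∑ i, q (αs.1 i + t - c i j))
          + ∑ j' ∈ Finset.univ.erase j, ∑ i, q (αs.1 i + αs.2 j' - c i j') := by
      rw [Finset.sum_comm]
      exact sum_update_split αs.2 j t (fun j' x => ∑ i, q (αs.1 i + x - c i j'))
    have h2 := sum_update_split αs.2 j t (fun _ x => x^2)
    have h3 := sum_update_split αs.2 j t (fun j' x => μ2 j' * x)
    simp only [Phi, h1, h2, h3, hCj]
    ring
  have hA : HasDerivAt (fun t => (∑ i, q (αs.1 i + t - c i j)) + γ*ε/2*t^2 - γ*(μ2 j)*t)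
      ((∑ i, max (αs.1 i + αs.2 j - c i j) 0) + γ*ε*(αs.2 j) - γ*(μ2 j)) (αs.2 j) := by
    have hsum : HasDerivAt (fun t => ∑ i, q (αs.1 i + t - c i j))
        (∑ i, max (αs.1 i + αs.2 j - c i j) 0) (αs.2 j) := by
      apply HasDerivAt.fun_sum
      intro i _
      have hin : HasDerivAt (fun t : ℝ => αs.1 i + t - c i j) 1 (αs.2 j) := by
        simpa using ((hasDerivAt_id (αs.2 j)).const_add (αs.1 i)).sub_const (c i j)
      have := (hasDerivAt_q (αs.1 i + αs.2 j - c i j)).comp (αs.2 j) hin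
      exact this.congr_deriv (mul_one _)
    have hq2 : HasDerivAt (fun t : ℝ => γ*ε/2*t^2) (γ*ε*(αs.2 j)) (αs.2 j) := by
      have := (hasDerivAt_pow 2 (αs.2 j)).const_mul (γ*ε/2)
      exact this.congr_deriv (by push_cast; ring)
    have hl : HasDerivAt (fun t : ℝ => γ*(μ2 j)*t) (γ*(μ2 j)) (αs.2 j) := by
      simpa using (hasDerivAt_id (αs.2 j)).const_mul (γ*(μ2 j))
    exact (hsum.add hq2).sub hl
  have hd : HasDerivAt (fun t => Phi γ ε c μ1 μ2 (αs.1, Function.update αs.2 j t))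
      ((∑ i, max (αs.1 i + αs.2 j - c i j) 0) + γ*ε*(αs.2 j) - γ*(μ2 j)) (αs.2 j) := by
    rw [hge]; exact hA.add_const Cj
  have hloc : IsLocalMin (fun t => Phi γ ε c μ1 μ2 (αs.1, Function.update αs.2 j t)) (αs.2 j) := by
    apply Filter.Eventually.of_forall
    intro t
    have hupd : Function.update αs.2 j (αs.2 j) = αs.2 := Function.update_eq_self j αs.2
    simp only [hupd]
    exact hmin _
  have h0 := hloc.hasDerivAt_eq_zero hd
  linarith

/-- Existence of a global minimizer of `Phi`. -/
lemma exists_global_min {n1 n2 : ℕ} {γ ε : ℝ} (hγ : 0 < γ) (hε : 0 < ε)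
    (c : Fin n1 → Fin n2 → ℝ) (μ1 : Fin n1 → ℝ) (μ2 : Fin n2 → ℝ) :
    ∃ αs : (Fin n1 → ℝ) × (Fin n2 → ℝ), ∀ x, Phi γ ε c μ1 μ2 αs ≤ Phi γ ε c μ1 μ2 x := by
  set K : ℝ := (∑ i, γ/ε*(μ1 i)^2) + (∑ j, γ/ε*(μ2 j)^2) with hK
  have hK0 : 0 ≤ K := by
    apply add_nonneg <;>
      exact Finset.sum_nonneg fun _ _ => mul_nonneg (div_nonneg hγ.le hε.le) (sq_nonneg _)
  set P0 : ℝ := Phi γ ε c μ1 μ2 0 with hP0def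
  have hP00 : 0 ≤ P0 := by
    have : P0 = ∑ i, ∑ j, q ((0:ℝ) + 0 - c i j) := by
      simp [hP0def, Phi]
    rw [this]
    exact Finset.sum_nonneg fun i _ => Finset.sum_nonneg fun j _ => q_nonneg _
  set R : ℝ := Real.sqrt ((K + P0 + 1) * (4/(γ*ε))) with hRdef
  have hR0 : 0 ≤ R := Real.sqrt_nonneg _
  have hγε : 0 < γ * ε := mul_pos hγ hε
  have hR2 : γ*ε/4 * R^2 = K + P0 + 1 := by
    rw [hRdef, Real.sq_sqrt (by positivity)]
    field_simp
  have hcont := continuous_Phi γ ε c μ1 μ2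
  obtain ⟨αs, hαmem, hαmin⟩ :=
    (isCompact_closedBall (0 : (Fin n1 → ℝ) × (Fin n2 → ℝ)) R).exists_isMinOn
      ⟨0, Metric.mem_closedBall_self hR0⟩ hcont.continuousOn
  refine ⟨αs, fun x => ?_⟩
  by_cases hx : x ∈ Metric.closedBall (0 : (Fin n1 → ℝ) × (Fin n2 → ℝ)) R
  · exact hαmin hx
  · -- x outside the ball: Phi x > P0 ≥ Phi αs
    have hPαs : Phi γ ε c μ1 μ2 αs ≤ P0 :=
      hαmin (Metric.mem_closedBall_self hR0)
    have hxnorm : R < ‖x‖ := by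
      simp only [Metric.mem_closedBall, dist_zero_right, not_le] at hx
      exact hx
    -- find a large coordinate
    have hcoord : (∃ i, R < |x.1 i|) ∨ (∃ j, R < |x.2 j|) := by
      by_contra hcon
      push_neg at hcon
      obtain ⟨h1, h2⟩ := hcon
      have e1 : ‖x.1‖ ≤ R := by
        apply (pi_norm_le_iff_of_nonneg hR0).2
        intro i; rw [Real.norm_eq_abs]; exact h1 i
      have e2 : ‖x.2‖ ≤ R := by
        apply (pi_norm_le_iff_of_nonneg hR0).2
        intro j; rw [Real.norm_eq_abs]; exact h2 j
      have : ‖x‖ ≤ R := by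
        rw [Prod.norm_def]; exact max_le e1 e2
      linarith
    have hS : R^2 < (∑ i, (x.1 i)^2) + (∑ j, (x.2 j)^2) := by
      have l1 : 0 ≤ ∑ i, (x.1 i)^2 := Finset.sum_nonneg fun _ _ => sq_nonneg _
      have l2 : 0 ≤ ∑ j, (x.2 j)^2 := Finset.sum_nonneg fun _ _ => sq_nonneg _
      rcases hcoord with ⟨i, hi⟩ | ⟨j, hj⟩
      · have : (x.1 i)^2 ≤ ∑ i', (x.1 i')^2 :=
          Finset.single_le_sum (fun i' _ => sq_nonneg (x.1 i')) (Finset.mem_univ i)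
        have hv : R^2 < (x.1 i)^2 := by
          have := abs_nonneg (x.1 i)
          nlinarith [sq_abs (x.1 i)]
        linarith
      · have : (x.2 j)^2 ≤ ∑ j', (x.2 j')^2 :=
          Finset.single_le_sum (fun j' _ => sq_nonneg (x.2 j')) (Finset.mem_univ j)
        have hv : R^2 < (x.2 j)^2 := by
          have := abs_nonneg (x.2 j)
          nlinarith [sq_abs (x.2 j)]
        linarith
    have hco := Phi_coercive hγ hε c μ1 μ2 x
    have hmul : γ*ε/4 * R^2 < γ*ε/4 * ((∑ i, (x.1 i)^2) + (∑ j, (x.2 j)^2)) := by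
      apply mul_lt_mul_of_pos_left hS
      positivity
    rw [hR2] at hmul
    refine le_of_lt ?_
    calc Phi γ ε c μ1 μ2 αs ≤ P0 := hPαs
      _ < K + P0 + 1 - K := by linarith
      _ < γ*ε/4 * ((∑ i, (x.1 i)^2) + (∑ j, (x.2 j)^2)) - K := by linarith
      _ ≤ Phi γ ε c μ1 μ2 x := hco


end RegDualAux

open RegDualAux

/-- The regularized dual system (for parameters γ, ε and cost c) associated with data
(μ1, μ2), in the unknowns (α1, α2). -/
def DualSys {n1 n2 : ℕ} (γ ε : ℝ) (c : Fin n1 → Fin n2 → ℝ)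
    (μ1 : Fin n1 → ℝ) (μ2 : Fin n2 → ℝ) (α1 : Fin n1 → ℝ) (α2 : Fin n2 → ℝ) : Prop :=
  (∀ i, (∑ j, max (α1 i + α2 j - c i j) 0) + γ * ε * α1 i = γ * μ1 i) ∧
  (∀ j, (∑ i, max (α1 i + α2 j - c i j) 0) + γ * ε * α2 j = γ * μ2 j)

namespace RegDualAux

lemma dual_unique {n1 n2 : ℕ} {γ ε : ℝ} (hγ : 0 < γ) (hε : 0 < ε)
    {c : Fin n1 → Fin n2 → ℝ} {μ1 : Fin n1 → ℝ} {μ2 : Fin n2 → ℝ}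
    {a1 : Fin n1 → ℝ} {a2 : Fin n2 → ℝ} {b1 : Fin n1 → ℝ} {b2 : Fin n2 → ℝ}
    (ha : DualSys γ ε c μ1 μ2 a1 a2) (hb : DualSys γ ε c μ1 μ2 b1 b2) :
    a1 = b1 ∧ a2 = b2 := by
  set Δ : Fin n1 → Fin n2 → ℝ :=
    fun i j => max (a1 i + a2 j - c i j) 0 - max (b1 i + b2 j - c i j) 0 with hΔ
  have row : ∀ i, (∑ j, Δ i j) + γ*ε*(a1 i - b1 i) = 0 := by
    intro i
    have h1 := ha.1 i
    have h2 := hb.1 i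
    have h3 : ∑ j, Δ i j = (∑ j, max (a1 i + a2 j - c i j) 0)
        - ∑ j, max (b1 i + b2 j - c i j) 0 := by
      simp only [hΔ]; rw [Finset.sum_sub_distrib]
    rw [h3]; linarith
  have col : ∀ j, (∑ i, Δ i j) + γ*ε*(a2 j - b2 j) = 0 := by
    intro j
    have h1 := ha.2 j
    have h2 := hb.2 j
    have h3 : ∑ i, Δ i j = (∑ i, max (a1 i + a2 j - c i j) 0)
        - ∑ i, max (b1 i + b2 j - c i j) 0 := by
      simp only [hΔ]; rw [Finset.sum_sub_distrib]
    rw [h3]; linarith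
  have rowsum : ∑ i, ((∑ j, Δ i j * (a1 i - b1 i)) + γ*ε*(a1 i - b1 i)^2) = 0 :=
    Finset.sum_eq_zero fun i _ => by
      have h := row i
      have h4 : ∑ j, Δ i j * (a1 i - b1 i) = (∑ j, Δ i j) * (a1 i - b1 i) :=
        (Finset.sum_mul _ _ _).symm
      rw [h4]; linear_combination (a1 i - b1 i) * h
  have colsum : ∑ j, ((∑ i, Δ i j * (a2 j - b2 j)) + γ*ε*(a2 j - b2 j)^2) = 0 :=
    Finset.sum_eq_zero fun j _ => by
      have h := col j
      have h4 : ∑ i, Δ i j * (a2 j - b2 j) = (∑ i, Δ i j) * (a2 j - b2 j) :=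
        (Finset.sum_mul _ _ _).symm
      rw [h4]; linear_combination (a2 j - b2 j) * h
  rw [Finset.sum_add_distrib, ← Finset.mul_sum] at rowsum colsum
  have pos : 0 ≤ (∑ i, ∑ j, Δ i j * (a1 i - b1 i)) + (∑ j, ∑ i, Δ i j * (a2 j - b2 j)) := by
    have comb : (∑ i, ∑ j, Δ i j * (a1 i - b1 i)) + (∑ j, ∑ i, Δ i j * (a2 j - b2 j))
        = ∑ i, ∑ j, Δ i j * ((a1 i - b1 i) + (a2 j - b2 j)) := by
      rw [Finset.sum_comm (s := (Finset.univ : Finset (Fin n2)))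
        (t := (Finset.univ : Finset (Fin n1))) (f := fun j i => Δ i j * (a2 j - b2 j))]
      rw [← Finset.sum_add_distrib]
      exact Finset.sum_congr rfl fun i _ => by
        rw [← Finset.sum_add_distrib]
        exact Finset.sum_congr rfl fun j _ => by ring
    rw [comb]
    apply Finset.sum_nonneg; intro i _
    apply Finset.sum_nonneg; intro j _
    have hm := mono_max (a1 i + a2 j - c i j) (b1 i + b2 j - c i j)
    have harg : (a1 i + a2 j - c i j) - (b1 i + b2 j - c i j)
        = (a1 i - b1 i) + (a2 j - b2 j) := by ring
    rw [harg] at hm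
    simpa [hΔ] using hm
  have D1 : 0 ≤ ∑ i, (a1 i - b1 i)^2 := Finset.sum_nonneg fun i _ => sq_nonneg _
  have D2 : 0 ≤ ∑ j, (a2 j - b2 j)^2 := Finset.sum_nonneg fun j _ => sq_nonneg _
  have hγε : 0 < γ*ε := mul_pos hγ hε
  have hz1 : ∑ i, (a1 i - b1 i)^2 = 0 := by nlinarith
  have hz2 : ∑ j, (a2 j - b2 j)^2 = 0 := by nlinarith
  constructor
  · funext i
    have hzz := (Finset.sum_eq_zero_iff_of_nonneg (fun i _ => sq_nonneg (a1 i - b1 i))).1 hz1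
      i (Finset.mem_univ i)
    have h5 : a1 i - b1 i = 0 := by nlinarith [hzz]
    linarith
  · funext j
    have hzz := (Finset.sum_eq_zero_iff_of_nonneg (fun j _ => sq_nonneg (a2 j - b2 j))).1 hz2
      j (Finset.mem_univ j)
    have h5 : a2 j - b2 j = 0 := by nlinarith [hzz]
    linarith

end RegDualAux

/-- For any marginals (with no sign or mass restriction), the regularized dual system
has exactly one solution. -/
theorem regularized_dual_system_unique_solution (n1 n2 : ℕ) (hn1 : 0 < n1) (hn2 : 0 < n2)
    (γ ε : ℝ) (hγ : 0 < γ) (hε : 0 < ε) (c : Fin n1 → Fin n2 → ℝ)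
    (μ1 : Fin n1 → ℝ) (μ2 : Fin n2 → ℝ) :
    ∃! α : (Fin n1 → ℝ) × (Fin n2 → ℝ), DualSys γ ε c μ1 μ2 α.1 α.2 := by
  obtain ⟨αs, hmin⟩ := exists_global_min hγ hε c μ1 μ2
  have hsys : DualSys γ ε c μ1 μ2 αs.1 αs.2 :=
    ⟨row_eq c μ1 μ2 αs hmin, col_eq c μ1 μ2 αs hmin⟩
  refine ⟨αs, hsys, fun y hy => ?_⟩
  obtain ⟨h1, h2⟩ := dual_unique hγ hε hy hsys
  exact Prod.ext h1 h2
end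
end

section
/- Let n1, n2 be positive integers, let γ > 0 and ε > 0, and let c ∈ ℝ^{n1×n2}. Let F_{γ,ε} : ℝ^{n1} × ℝ^{n2} → ℝ^{n1} × ℝ^{n2} map (μ1, μ2) to the unique solution (α1, α2) of the regularized dual system, and let S_{γ,ε}(μ1, μ2) := (1/γ)(α1 ⊕ α2 − c)_+ where (α1, α2) = F_{γ,ε}(μ1, μ2). Then both F_{γ,ε} and S_{γ,ε} are Lipschitz continuous: there exist constants L1, L2 ≥ 0 such that ‖F_{γ,ε}(μ) − F_{γ,ε}(ν)‖ ≤ L1 ‖μ − ν‖ and ‖S_{γ,ε}(μ) − S_{γ,ε}(ν)‖_F ≤ L2 ‖μ − ν‖ for all μ, ν ∈ ℝ^{n1} × ℝ^{n2}. -/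
noncomputable section

/-- The regularized marginal-to-transport-plan mapping S_{γ,ε} associated with a solution
operator F of the regularized dual system. -/
def Smap {n1 n2 : ℕ} (γ : ℝ) (c : Fin n1 → Fin n2 → ℝ)
    (F : (Fin n1 → ℝ) × (Fin n2 → ℝ) → (Fin n1 → ℝ) × (Fin n2 → ℝ))
    (μ : (Fin n1 → ℝ) × (Fin n2 → ℝ)) : Fin n1 → Fin n2 → ℝ :=
  fun i j => (1 / γ) * max ((F μ).1 i + (F μ).2 j - c i j) 0

lemma max_sub_max_mul_nonneg (x y : ℝ) : 0 ≤ (max x 0 - max y 0) * (x - y) := by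
  rcases le_total x y with h | h
  · have h1 : max x 0 ≤ max y 0 := max_le_max h le_rfl
    nlinarith
  · have h1 : max y 0 ≤ max x 0 := max_le_max h le_rfl
    nlinarith

/-- Both the solution operator F_{γ,ε} of the regularized dual system and the regularized
marginal-to-transport-plan mapping S_{γ,ε} are Lipschitz continuous. -/
theorem solution_operator_and_Smap_lipschitz (n1 n2 : ℕ) (hn1 : 0 < n1) (hn2 : 0 < n2)
    (γ ε : ℝ) (hγ : 0 < γ) (hε : 0 < ε) (c : Fin n1 → Fin n2 → ℝ)
    (F : (Fin n1 → ℝ) × (Fin n2 → ℝ) → (Fin n1 → ℝ) × (Fin n2 → ℝ))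
    (hF : ∀ μ : (Fin n1 → ℝ) × (Fin n2 → ℝ), DualSys γ ε c μ.1 μ.2 (F μ).1 (F μ).2) :
    ∃ L1 L2 : ℝ, 0 ≤ L1 ∧ 0 ≤ L2 ∧
      (∀ μ ν : (Fin n1 → ℝ) × (Fin n2 → ℝ), ‖F μ - F ν‖ ≤ L1 * ‖μ - ν‖) ∧
      (∀ μ ν : (Fin n1 → ℝ) × (Fin n2 → ℝ),
        Real.sqrt (∑ i, ∑ j, (Smap γ c F μ i j - Smap γ c F ν i j) ^ 2) ≤ L2 * ‖μ - ν‖) := by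
  set L1 : ℝ := ((n1 : ℝ) + n2) / ε with hL1def
  have hL1 : 0 ≤ L1 := by positivity
  -- main Lipschitz estimate for F
  have key : ∀ μ ν : (Fin n1 → ℝ) × (Fin n2 → ℝ), ‖F μ - F ν‖ ≤ L1 * ‖μ - ν‖ := by
    intro μ ν
    obtain ⟨ha1, ha2⟩ := hF μ
    obtain ⟨hb1, hb2⟩ := hF ν
    set a1 := (F μ).1 with ha1def
    set a2 := (F μ).2 with ha2def
    set b1 := (F ν).1 with hb1def
    set b2 := (F ν).2 with hb2def
    set N := ‖F μ - F ν‖ with hNdef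
    set K := ‖μ - ν‖ with hKdef
    have hK0 : 0 ≤ K := norm_nonneg _
    have hN0 : 0 ≤ N := norm_nonneg _
    have hΔ1 : ∀ i, |a1 i - b1 i| ≤ N := by
      intro i
      calc |a1 i - b1 i| = ‖(F μ - F ν).1 i‖ := by
            simp [Prod.fst_sub, Real.norm_eq_abs, ha1def, hb1def]
        _ ≤ ‖(F μ - F ν).1‖ := norm_le_pi_norm _ i
        _ ≤ N := norm_fst_le _
    have hΔ2 : ∀ j, |a2 j - b2 j| ≤ N := by
      intro j
      calc |a2 j - b2 j| = ‖(F μ - F ν).2 j‖ := by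
            simp [Prod.snd_sub, Real.norm_eq_abs, ha2def, hb2def]
        _ ≤ ‖(F μ - F ν).2‖ := norm_le_pi_norm _ j
        _ ≤ N := norm_snd_le _
    have hμ1 : ∀ i, |μ.1 i - ν.1 i| ≤ K := by
      intro i
      calc |μ.1 i - ν.1 i| = ‖(μ - ν).1 i‖ := by
            simp [Prod.fst_sub, Real.norm_eq_abs]
        _ ≤ ‖(μ - ν).1‖ := norm_le_pi_norm _ i
        _ ≤ K := norm_fst_le _
    have hμ2 : ∀ j, |μ.2 j - ν.2 j| ≤ K := by
      intro j
      calc |μ.2 j - ν.2 j| = ‖(μ - ν).2 j‖ := by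
            simp [Prod.snd_sub, Real.norm_eq_abs]
        _ ≤ ‖(μ - ν).2‖ := norm_le_pi_norm _ j
        _ ≤ K := norm_snd_le _
    set D : Fin n1 → Fin n2 → ℝ :=
      fun i j => max (a1 i + a2 j - c i j) 0 - max (b1 i + b2 j - c i j) 0 with hDdef
    have E1 : ∀ i, (∑ j, D i j) + γ * ε * (a1 i - b1 i) = γ * (μ.1 i - ν.1 i) := by
      intro i
      simp only [hDdef, Finset.sum_sub_distrib]
      linear_combination ha1 i - hb1 i
    have E2 : ∀ j, (∑ i, D i j) + γ * ε * (a2 j - b2 j) = γ * (μ.2 j - ν.2 j) := by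
      intro j
      simp only [hDdef, Finset.sum_sub_distrib]
      linear_combination ha2 j - hb2 j
    set S : ℝ := (∑ i, (a1 i - b1 i) ^ 2) + (∑ j, (a2 j - b2 j) ^ 2) with hSdef
    have hS0 : 0 ≤ S := by positivity
    -- monotonicity: T ≥ 0
    have hT : 0 ≤ ∑ i, ∑ j, D i j * ((a1 i - b1 i) + (a2 j - b2 j)) := by
      apply Finset.sum_nonneg; intro i _
      apply Finset.sum_nonneg; intro j _
      have h := max_sub_max_mul_nonneg (a1 i + a2 j - c i j) (b1 i + b2 j - c i j)
      have hxy : (a1 i + a2 j - c i j) - (b1 i + b2 j - c i j)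
          = (a1 i - b1 i) + (a2 j - b2 j) := by ring
      rw [hxy] at h
      exact h
    have hTsplit : (∑ i, ∑ j, D i j * ((a1 i - b1 i) + (a2 j - b2 j)))
        = (∑ i, (∑ j, D i j) * (a1 i - b1 i)) + (∑ j, (∑ i, D i j) * (a2 j - b2 j)) := by
      simp only [mul_add, Finset.sum_add_distrib, Finset.sum_mul]
      congr 1
      exact Finset.sum_comm
    have hstep : ε * S ≤ K * (((n1 : ℝ) + n2) * N) := by
      have h1 : (∑ i, (∑ j, D i j) * (a1 i - b1 i))
          = ∑ i, (γ * (μ.1 i - ν.1 i) - γ * ε * (a1 i - b1 i)) * (a1 i - b1 i) := by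
        apply Finset.sum_congr rfl; intro i _
        linear_combination (a1 i - b1 i) * (E1 i)
      have h2 : (∑ j, (∑ i, D i j) * (a2 j - b2 j))
          = ∑ j, (γ * (μ.2 j - ν.2 j) - γ * ε * (a2 j - b2 j)) * (a2 j - b2 j) := by
        apply Finset.sum_congr rfl; intro j _
        linear_combination (a2 j - b2 j) * (E2 j)
      have hb1' : (∑ i, (μ.1 i - ν.1 i) * (a1 i - b1 i)) ≤ (n1 : ℝ) * (K * N) := by
        calc (∑ i, (μ.1 i - ν.1 i) * (a1 i - b1 i)) ≤ ∑ _i : Fin n1, K * N := by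
              apply Finset.sum_le_sum; intro i _
              calc (μ.1 i - ν.1 i) * (a1 i - b1 i) ≤ |(μ.1 i - ν.1 i) * (a1 i - b1 i)| :=
                    le_abs_self _
                _ = |μ.1 i - ν.1 i| * |a1 i - b1 i| := abs_mul _ _
                _ ≤ K * N := mul_le_mul (hμ1 i) (hΔ1 i) (abs_nonneg _) hK0
          _ = (n1 : ℝ) * (K * N) := by simp [Finset.sum_const, mul_comm]
      have hb2' : (∑ j, (μ.2 j - ν.2 j) * (a2 j - b2 j)) ≤ (n2 : ℝ) * (K * N) := by
        calc (∑ j, (μ.2 j - ν.2 j) * (a2 j - b2 j)) ≤ ∑ _j : Fin n2, K * N := by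
              apply Finset.sum_le_sum; intro j _
              calc (μ.2 j - ν.2 j) * (a2 j - b2 j) ≤ |(μ.2 j - ν.2 j) * (a2 j - b2 j)| :=
                    le_abs_self _
                _ = |μ.2 j - ν.2 j| * |a2 j - b2 j| := abs_mul _ _
                _ ≤ K * N := mul_le_mul (hμ2 j) (hΔ2 j) (abs_nonneg _) hK0
          _ = (n2 : ℝ) * (K * N) := by simp [Finset.sum_const, mul_comm]
      have hexp1 : (∑ i, (γ * (μ.1 i - ν.1 i) - γ * ε * (a1 i - b1 i)) * (a1 i - b1 i))
          = γ * (∑ i, (μ.1 i - ν.1 i) * (a1 i - b1 i)) - γ * ε * (∑ i, (a1 i - b1 i) ^ 2) := by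
        rw [Finset.mul_sum, Finset.mul_sum, ← Finset.sum_sub_distrib]
        apply Finset.sum_congr rfl; intro i _; ring
      have hexp2 : (∑ j, (γ * (μ.2 j - ν.2 j) - γ * ε * (a2 j - b2 j)) * (a2 j - b2 j))
          = γ * (∑ j, (μ.2 j - ν.2 j) * (a2 j - b2 j)) - γ * ε * (∑ j, (a2 j - b2 j) ^ 2) := by
        rw [Finset.mul_sum, Finset.mul_sum, ← Finset.sum_sub_distrib]
        apply Finset.sum_congr rfl; intro j _; ring
      rw [hTsplit, h1, h2, hexp1, hexp2] at hT
      have hγS : γ * (ε * S) ≤ γ * (K * (((n1 : ℝ) + n2) * N)) := by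
        rw [hSdef]; nlinarith [hb1', hb2']
      exact le_of_mul_le_mul_left hγS hγ
    -- N ^ 2 ≤ S
    have hNsq : N ^ 2 ≤ S := by
      have hsq1 : ‖(F μ - F ν).1‖ ≤ Real.sqrt S := by
        apply pi_norm_le_iff_of_nonneg (Real.sqrt_nonneg S) |>.mpr
        intro i
        rw [show ((F μ - F ν).1 i) = a1 i - b1 i by simp [Prod.fst_sub, ha1def, hb1def],
          Real.norm_eq_abs]
        apply Real.abs_le_sqrt
        calc (a1 i - b1 i) ^ 2 ≤ ∑ i', (a1 i' - b1 i') ^ 2 :=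
              Finset.single_le_sum (f := fun i' => (a1 i' - b1 i') ^ 2)
                (fun i' _ => sq_nonneg _) (Finset.mem_univ i)
          _ ≤ S := by
              have h2 : (0:ℝ) ≤ ∑ j, (a2 j - b2 j) ^ 2 := by positivity
              rw [hSdef]; linarith
      have hsq2 : ‖(F μ - F ν).2‖ ≤ Real.sqrt S := by
        apply pi_norm_le_iff_of_nonneg (Real.sqrt_nonneg S) |>.mpr
        intro j
        rw [show ((F μ - F ν).2 j) = a2 j - b2 j by simp [Prod.snd_sub, ha2def, hb2def],
          Real.norm_eq_abs]
        apply Real.abs_le_sqrt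
        calc (a2 j - b2 j) ^ 2 ≤ ∑ j', (a2 j' - b2 j') ^ 2 :=
              Finset.single_le_sum (f := fun j' => (a2 j' - b2 j') ^ 2)
                (fun j' _ => sq_nonneg _) (Finset.mem_univ j)
          _ ≤ S := by
              have h1 : (0:ℝ) ≤ ∑ i, (a1 i - b1 i) ^ 2 := by positivity
              rw [hSdef]; linarith
      have hNle : N ≤ Real.sqrt S := by
        rw [hNdef, Prod.norm_def]
        exact max_le hsq1 hsq2
      calc N ^ 2 ≤ Real.sqrt S ^ 2 := pow_le_pow_left₀ hN0 hNle 2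
        _ = S := Real.sq_sqrt hS0
    -- conclude
    rcases eq_or_lt_of_le hN0 with hN | hN
    · rw [← hN]; positivity
    · rw [hL1def, div_mul_eq_mul_div, le_div_iff₀ hε]
      have h := hstep.trans' (by nlinarith : ε * N ^ 2 ≤ ε * S)
      nlinarith
  refine ⟨L1, Real.sqrt ((n1 : ℝ) * n2) * (2 * L1 / γ), hL1, by positivity, key, ?_⟩
  intro μ ν
  set K := ‖μ - ν‖ with hKdef
  have hK0 : 0 ≤ K := norm_nonneg _
  set B : ℝ := 2 / γ * (L1 * K) with hBdef
  have hB0 : 0 ≤ B := by positivity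
  have hN : ‖F μ - F ν‖ ≤ L1 * K := key μ ν
  have hpt : ∀ i j, |Smap γ c F μ i j - Smap γ c F ν i j| ≤ B := by
    intro i j
    have hΔ1 : |(F μ).1 i - (F ν).1 i| ≤ L1 * K := by
      calc |(F μ).1 i - (F ν).1 i| = ‖(F μ - F ν).1 i‖ := by
            simp [Prod.fst_sub, Real.norm_eq_abs]
        _ ≤ ‖(F μ - F ν).1‖ := norm_le_pi_norm _ i
        _ ≤ ‖F μ - F ν‖ := norm_fst_le _
        _ ≤ L1 * K := hN
    have hΔ2 : |(F μ).2 j - (F ν).2 j| ≤ L1 * K := by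
      calc |(F μ).2 j - (F ν).2 j| = ‖(F μ - F ν).2 j‖ := by
            simp [Prod.snd_sub, Real.norm_eq_abs]
        _ ≤ ‖(F μ - F ν).2‖ := norm_le_pi_norm _ j
        _ ≤ ‖F μ - F ν‖ := norm_snd_le _
        _ ≤ L1 * K := hN
    have hmax : |max ((F μ).1 i + (F μ).2 j - c i j) 0 - max ((F ν).1 i + (F ν).2 j - c i j) 0|
        ≤ |((F μ).1 i + (F μ).2 j - c i j) - ((F ν).1 i + (F ν).2 j - c i j)| :=
      abs_max_sub_max_le_abs _ _ _
    have habs : |((F μ).1 i + (F μ).2 j - c i j) - ((F ν).1 i + (F ν).2 j - c i j)|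
        ≤ 2 * (L1 * K) := by
      calc |((F μ).1 i + (F μ).2 j - c i j) - ((F ν).1 i + (F ν).2 j - c i j)|
          = |((F μ).1 i - (F ν).1 i) + ((F μ).2 j - (F ν).2 j)| := by ring_nf
        _ ≤ |(F μ).1 i - (F ν).1 i| + |(F μ).2 j - (F ν).2 j| := abs_add_le _ _
        _ ≤ 2 * (L1 * K) := by linarith
    have : |Smap γ c F μ i j - Smap γ c F ν i j|
        = (1 / γ) * |max ((F μ).1 i + (F μ).2 j - c i j) 0
            - max ((F ν).1 i + (F ν).2 j - c i j) 0| := by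
      rw [Smap, Smap, ← mul_sub, abs_mul, abs_of_pos (by positivity : (0:ℝ) < 1 / γ)]
    rw [this, hBdef]
    calc (1 / γ) * |max ((F μ).1 i + (F μ).2 j - c i j) 0
            - max ((F ν).1 i + (F ν).2 j - c i j) 0|
        ≤ (1 / γ) * (2 * (L1 * K)) := by
          apply mul_le_mul_of_nonneg_left (hmax.trans habs) (by positivity)
      _ = 2 / γ * (L1 * K) := by ring
  have hsum : (∑ i, ∑ j, (Smap γ c F μ i j - Smap γ c F ν i j) ^ 2)
      ≤ (n1 : ℝ) * n2 * B ^ 2 := by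
    calc (∑ i, ∑ j, (Smap γ c F μ i j - Smap γ c F ν i j) ^ 2)
        ≤ ∑ _i : Fin n1, ∑ _j : Fin n2, B ^ 2 := by
          apply Finset.sum_le_sum; intro i _
          apply Finset.sum_le_sum; intro j _
          have := hpt i j
          nlinarith [abs_nonneg (Smap γ c F μ i j - Smap γ c F ν i j),
            sq_abs (Smap γ c F μ i j - Smap γ c F ν i j)]
      _ = (n1 : ℝ) * n2 * B ^ 2 := by simp [Finset.sum_const]; ring
  calc Real.sqrt (∑ i, ∑ j, (Smap γ c F μ i j - Smap γ c F ν i j) ^ 2)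
      ≤ Real.sqrt ((n1 : ℝ) * n2 * B ^ 2) := Real.sqrt_le_sqrt hsum
    _ = Real.sqrt ((n1 : ℝ) * n2) * B := by
        rw [Real.sqrt_mul (by positivity), Real.sqrt_sq hB0]
    _ = Real.sqrt ((n1 : ℝ) * n2) * (2 * L1 / γ) * K := by rw [hBdef]; ring
end
end
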